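/- arXiv:1609.04974 — 2 statements merged into one kernel-verified Lean document; each statement's English description precedes it below -/
import Mathlib

section
/- For 0<|q|<1 and nonzero x, y: j(-x;q) j(y;q) + j(x;q) j(-y;q) = 2 j(xy;q^2) j(q x^{-1} y;q^2), where j(x;q) := (x;q)_∞(q/x;q)_∞(q;q)_∞. -/
noncomputable def qPochInf (x q : ℂ) : ℂ := ∏' i : ℕ, (1 - q ^ i * x)

noncomputable def jt (x q : ℂ) : ℂ := qPochInf x q * qPochInf (q / x) q * qPochInf q q

noncomputable def appellLerch (x q z : ℂ) : ℂ :=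
  (jt z q)⁻¹ * ∑' r : ℤ, (-1) ^ r * q ^ (r * (r - 1) / 2) * z ^ r / (1 - q ^ (r - 1) * x * z)

noncomputable def qPochFin (x q : ℂ) (n : ℕ) : ℂ := ∏ i ∈ Finset.range n, (1 - q ^ i * x)

open Filter Finset

-- Multipliability
lemma multipliable_qPoch {q : ℂ} (hq : ‖q‖ < 1) (x : ℂ) :
    Multipliable (fun i : ℕ => 1 - q ^ i * x) := by
  by_cases h : ∀ i : ℕ, 1 - q ^ i * x ≠ 0
  · exact (fun (f : ℕ → Unit → ℂ) (_ : ∀ x n, f n x ≠ 0)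
        (hf : ∀ x, Summable fun n => Complex.log (f n x)) (x : Unit) =>
        Complex.multipliable_of_summable_log (hf x)) (fun i (_ : Unit) => 1 - q ^ i * x)
      (fun _ i => h i)
      (fun _ => by
        apply Summable.of_norm_bounded_eventually_nat (g := fun i => (3/2) * (‖x‖ * ‖q‖ ^ i))
        · exact (summable_geometric_of_lt_one (norm_nonneg q) hq).mul_left _ |>.mul_left _
        · have h0 : Tendsto (fun i : ℕ => ‖x‖ * ‖q‖ ^ i) atTop (nhds 0) := by
            simpa using (tendsto_pow_atTop_nhds_zero_of_lt_one (norm_nonneg q) hq).const_mul ‖x‖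
          filter_upwards [h0.eventually_le_const (by norm_num : (0:ℝ) < 1/2)] with i hi
          have : (1 : ℂ) - q ^ i * x = 1 + (-(q ^ i * x)) := by ring
          rw [this]
          calc ‖Complex.log (1 + -(q ^ i * x))‖ ≤ 3/2 * ‖-(q ^ i * x)‖ := by
                apply Complex.norm_log_one_add_half_le_self
                rw [norm_neg, norm_mul, norm_pow]
                calc ‖q‖ ^ i * ‖x‖ = ‖x‖ * ‖q‖ ^ i := by ring
                  _ ≤ 1/2 := hi
            _ ≤ 3/2 * (‖x‖ * ‖q‖ ^ i) := by
                rw [norm_neg, norm_mul, norm_pow]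
                nlinarith [norm_nonneg x, pow_nonneg (norm_nonneg q) i]) Unit.unit
  · push_neg at h
    obtain ⟨i₀, hi₀⟩ := h
    refine ⟨0, ?_⟩
    rw [HasProd]
    have : ∀ᶠ s : Finset ℕ in atTop, ∏ i ∈ s, (1 - q ^ i * x) = 0 := by
      filter_upwards [eventually_ge_atTop {i₀}] with s hs
      exact Finset.prod_eq_zero (hs (Finset.mem_singleton_self i₀)) hi₀
    exact Tendsto.congr' (this.mono fun s hs => hs.symm) tendsto_const_nhds

lemma tendsto_qPochFin {q : ℂ} (hq : ‖q‖ < 1) (x : ℂ) :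
    Tendsto (fun n => qPochFin x q n) atTop (nhds (qPochInf x q)) :=
  (multipliable_qPoch hq x).hasProd.tendsto_prod_nat

-- Weierstrass product inequality
lemma one_sub_sum_le_prod_one_sub (n : ℕ) (a : ℕ → ℝ) (h0 : ∀ i, 0 ≤ a i)
    (h1 : ∀ i, a i ≤ 1) : ∀ m, 1 - ∑ i ∈ Finset.Ico m (m + n), a i ≤
      ∏ i ∈ Finset.Ico m (m + n), (1 - a i) := by
  induction n with
  | zero => simp
  | succ n ih =>
    intro m
    have hm : m ≤ m + n := by omega
    rw [show m + (n+1) = (m+n)+1 by omega, Finset.sum_Ico_succ_top hm,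
      Finset.prod_Ico_succ_top hm]
    have h2 : (0:ℝ) ≤ ∏ i ∈ Finset.Ico m (m + n), (1 - a i) :=
      Finset.prod_nonneg fun i _ => by linarith [h1 i]
    have h3 : ∏ i ∈ Finset.Ico m (m + n), (1 - a i) ≤ 1 :=
      Finset.prod_le_one (fun i _ => by linarith [h1 i]) (fun i _ => by linarith [h0 i])
    nlinarith [ih m, h0 (m+n), h1 (m+n)]

-- geometric tail bound
lemma geom_Ico_le {r : ℝ} (h0 : 0 ≤ r) (h1 : r < 1) (M n : ℕ) :
    ∑ i ∈ Finset.Ico M n, r ^ (i + 1) ≤ r ^ (M + 1) / (1 - r) := by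
  rcases le_or_gt M n with h | h
  · calc ∑ i ∈ Finset.Ico M n, r ^ (i+1)
        = ∑ j ∈ Finset.range (n - M), r ^ (M + j + 1) := by
          rw [Finset.sum_Ico_eq_sum_range]
      _ = r ^ (M+1) * ∑ j ∈ Finset.range (n - M), r ^ j := by
          rw [Finset.mul_sum]; exact Finset.sum_congr rfl fun j _ => by ring
      _ ≤ r ^ (M+1) * (1 - r)⁻¹ := by
          apply mul_le_mul_of_nonneg_left _ (pow_nonneg h0 _)
          calc ∑ j ∈ Finset.range (n - M), r ^ j
              ≤ ∑' j : ℕ, r ^ j := Summable.sum_le_tsum _ (fun j _ => pow_nonneg h0 j)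
                (summable_geometric_of_lt_one h0 h1)
            _ = (1 - r)⁻¹ := tsum_geometric_of_lt_one h0 h1
      _ = r ^ (M+1) / (1 - r) := by rw [div_eq_mul_inv]
  · rw [Finset.Ico_eq_empty (by omega)]
    have hr2 : (0:ℝ) < 1 - r := by linarith
    have : (0:ℝ) ≤ r ^ (M+1) / (1-r) := by positivity
    simpa using this

section Pq
variable {q : ℂ} (hq : ‖q‖ < 1)

lemma norm_one_sub_ge (z : ℂ) : 1 - ‖z‖ ≤ ‖1 - z‖ := by
  have := norm_sub_norm_le (1:ℂ) z
  simpa using this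

include hq in
lemma qPochFin_q_lower : ∃ c : ℝ, 0 < c ∧ ∀ n, c ≤ ‖qPochFin q q n‖ := by
  set r := ‖q‖ with hr
  have hr0 : 0 ≤ r := norm_nonneg q
  have hfac : ∀ i : ℕ, 0 < 1 - r ^ (i+1) := fun i => by
    have : r ^ (i+1) < 1 := pow_lt_one₀ hr0 hq (by omega)
    linarith
  have hfac1 : ∀ i : ℕ, 1 - r ^ (i+1) ≤ 1 := fun i => by
    have : 0 ≤ r ^ (i+1) := pow_nonneg hr0 _
    linarith
  obtain ⟨M, hM⟩ : ∃ M : ℕ, r ^ (M+1) / (1-r) ≤ 1/2 := by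
    have h0 : Tendsto (fun M : ℕ => r ^ (M+1) / (1-r)) atTop (nhds 0) := by
      have := (tendsto_pow_atTop_nhds_zero_of_lt_one hr0 hq).comp (tendsto_add_atTop_nat 1)
      simpa [Function.comp] using this.div_const (1-r)
    exact (h0.eventually_le_const (by norm_num : (0:ℝ) < 1/2)).exists
  have hprodM : 0 < ∏ i ∈ Finset.range M, (1 - r ^ (i+1)) :=
    Finset.prod_pos fun i _ => hfac i
  refine ⟨(∏ i ∈ Finset.range M, (1 - r ^ (i+1))) * (1/2), by positivity, fun n => ?_⟩
  have key : (∏ i ∈ Finset.range M, (1 - r ^ (i+1))) * (1/2) ≤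
      ∏ i ∈ Finset.range n, (1 - r ^ (i+1)) := by
    rcases le_or_gt n M with h | h
    · calc (∏ i ∈ Finset.range M, (1 - r ^ (i+1))) * (1/2)
          ≤ (∏ i ∈ Finset.range M, (1 - r ^ (i+1))) * 1 := by
            apply mul_le_mul_of_nonneg_left (by norm_num) (le_of_lt hprodM)
        _ = ∏ i ∈ Finset.range M, (1 - r ^ (i+1)) := mul_one _
        _ ≤ ∏ i ∈ Finset.range n, (1 - r ^ (i+1)) := by
            rw [← Finset.prod_range_mul_prod_Ico _ h]
            have h1 : ∏ i ∈ Finset.Ico n M, (1 - r ^ (i+1)) ≤ 1 :=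
              Finset.prod_le_one (fun i _ => (hfac i).le) (fun i _ => hfac1 i)
            have h2 : 0 < ∏ i ∈ Finset.range n, (1 - r ^ (i+1)) :=
              Finset.prod_pos fun i _ => hfac i
            nlinarith [Finset.prod_pos (fun i (_ : i ∈ Finset.Ico n M) => hfac i)]
    · rw [← Finset.prod_range_mul_prod_Ico _ h.le]
      have h1 : 1/2 ≤ ∏ i ∈ Finset.Ico M n, (1 - r ^ (i+1)) := by
        have hW := one_sub_sum_le_prod_one_sub (n - M) (fun i => r ^ (i+1))
          (fun i => pow_nonneg hr0 _) (fun i => by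
            have : r ^ (i+1) ≤ 1 := pow_le_one₀ hr0 hq.le
            linarith) M
        rw [show M + (n - M) = n by omega] at hW
        have hG := geom_Ico_le hr0 hq M n
        linarith
      nlinarith
  calc (∏ i ∈ Finset.range M, (1 - r ^ (i+1))) * (1/2)
      ≤ ∏ i ∈ Finset.range n, (1 - r ^ (i+1)) := key
    _ ≤ ∏ i ∈ Finset.range n, ‖1 - q ^ i * q‖ := by
        apply Finset.prod_le_prod (fun i _ => (hfac i).le)
        intro i _
        have : ‖q ^ i * q‖ = r ^ (i+1) := by
          rw [norm_mul, norm_pow, pow_succ]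
        rw [← this]
        exact norm_one_sub_ge _
    _ = ‖qPochFin q q n‖ := by rw [qPochFin, norm_prod]

include hq in
lemma qPochFin_upper (x : ℂ) : ∀ n, ‖qPochFin x q n‖ ≤ Real.exp (‖x‖/(1-‖q‖)) := by
  intro n
  set r := ‖q‖
  have hr0 : 0 ≤ r := norm_nonneg q
  calc ‖qPochFin x q n‖ = ∏ i ∈ Finset.range n, ‖1 - q ^ i * x‖ := by
        rw [qPochFin, norm_prod]
    _ ≤ ∏ i ∈ Finset.range n, Real.exp (r ^ i * ‖x‖) := by
        apply Finset.prod_le_prod (fun i _ => norm_nonneg _)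
        intro i _
        calc ‖1 - q ^ i * x‖ ≤ ‖(1:ℂ)‖ + ‖q ^ i * x‖ := norm_sub_le _ _
          _ = 1 + r ^ i * ‖x‖ := by rw [norm_one, norm_mul, norm_pow]
          _ ≤ Real.exp (r ^ i * ‖x‖) := by
              have := Real.add_one_le_exp (r ^ i * ‖x‖)
              linarith
    _ = Real.exp (∑ i ∈ Finset.range n, r ^ i * ‖x‖) := by
        rw [Real.exp_sum]
    _ ≤ Real.exp (‖x‖/(1-r)) := by
        apply Real.exp_le_exp.2
        calc ∑ i ∈ Finset.range n, r ^ i * ‖x‖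
            = (∑ i ∈ Finset.range n, r ^ i) * ‖x‖ := by rw [Finset.sum_mul]
          _ ≤ (1-r)⁻¹ * ‖x‖ := by
              apply mul_le_mul_of_nonneg_right _ (norm_nonneg x)
              calc ∑ i ∈ Finset.range n, r ^ i ≤ ∑' i : ℕ, r ^ i :=
                    Summable.sum_le_tsum _ (fun i _ => pow_nonneg hr0 i)
                      (summable_geometric_of_lt_one hr0 hq)
                _ = (1-r)⁻¹ := tsum_geometric_of_lt_one hr0 hq
          _ = ‖x‖/(1-r) := by rw [div_eq_mul_inv, mul_comm]

include hq in
lemma qPochInf_q_ne_zero : qPochInf q q ≠ 0 := by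
  obtain ⟨c, hc, hle⟩ := qPochFin_q_lower hq
  have ht : Tendsto (fun n => ‖qPochFin q q n‖) atTop (nhds ‖qPochInf q q‖) :=
    (tendsto_qPochFin hq q).norm
  have : c ≤ ‖qPochInf q q‖ := ge_of_tendsto ht (Eventually.of_forall hle)
  intro h
  rw [h, norm_zero] at this
  linarith

end Pq

section Gauss
variable {q : ℂ} (hq : ‖q‖ < 1)

noncomputable def cgauss (q : ℂ) (n k : ℕ) : ℂ :=
  qPochFin q q n / (qPochFin q q k * qPochFin q q (n - k))

include hq in
lemma qPochFin_q_ne_zero (n : ℕ) : qPochFin q q n ≠ 0 := by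
  obtain ⟨c, hc, hle⟩ := qPochFin_q_lower hq
  intro h
  have := hle n
  rw [h, norm_zero] at this
  linarith

include hq in
lemma one_sub_q_pow_ne (i : ℕ) : (1 : ℂ) - q ^ i * q ≠ 0 := by
  intro h
  have h1 : (1:ℂ) = q ^ i * q := sub_eq_zero.mp h
  have h3 : (1:ℝ) = ‖q‖ ^ i * ‖q‖ := by
    rw [← norm_pow, ← norm_mul, ← h1, norm_one]
  have h2 : ‖q‖ ^ i * ‖q‖ < 1 := by
    rw [← pow_succ]
    exact pow_lt_one₀ (norm_nonneg q) hq (by omega)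
  linarith

lemma qPochFin_succ (x : ℂ) (n : ℕ) :
    qPochFin x q (n+1) = qPochFin x q n * (1 - q ^ n * x) := Finset.prod_range_succ _ _

lemma qPochFin_succ' (x : ℂ) (n : ℕ) :
    qPochFin x q (n+1) = qPochFin (q * x) q n * (1 - x) := by
  rw [qPochFin, Finset.prod_range_succ']
  simp only [pow_zero, one_mul, qPochFin]
  congr 1
  exact Finset.prod_congr rfl fun i _ => by ring_nf

include hq in
lemma cgauss_zero (n : ℕ) : cgauss q n 0 = 1 := by
  rw [cgauss]
  simp only [Nat.sub_zero, qPochFin, Finset.range_zero, Finset.prod_empty, one_mul]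
  exact div_self (qPochFin_q_ne_zero hq n)

include hq in
lemma cgauss_self (n : ℕ) : cgauss q n n = 1 := by
  rw [cgauss]
  simp only [Nat.sub_self, qPochFin, Finset.range_zero, Finset.prod_empty, mul_one]
  exact div_self (qPochFin_q_ne_zero hq n)

include hq in
lemma cgauss_pascal (k j : ℕ) :
    cgauss q (k+j+2) (k+1) =
      q ^ (k+1) * cgauss q (k+j+1) (k+1) + cgauss q (k+j+1) k := by
  have e1 : k+j+2-(k+1) = j+1 := by omega
  have e2 : k+j+1-(k+1) = j := by omega
  have e3 : k+j+1-k = j+1 := by omega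
  rw [cgauss, cgauss, cgauss, e1, e2, e3]
  rw [show k+j+2 = (k+j+1)+1 from rfl, qPochFin_succ q (k+j+1),
    qPochFin_succ q k, qPochFin_succ q j]
  have hPk := qPochFin_q_ne_zero hq k
  have hPj := qPochFin_q_ne_zero hq j
  have hPn := qPochFin_q_ne_zero hq (k+j+1)
  have hk1 := one_sub_q_pow_ne hq k
  have hj1 := one_sub_q_pow_ne hq j
  have hk1' : 1 - q * q ^ k ≠ 0 := by rw [mul_comm]; exact hk1
  have hj1' : 1 - q * q ^ j ≠ 0 := by rw [mul_comm]; exact hj1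
  field_simp
  ring
end Gauss

section GaussThm
variable {q : ℂ} (hq : ‖q‖ < 1)

include hq in
lemma gauss_binomial (n : ℕ) : ∀ t : ℂ,
    qPochFin t q n = ∑ k ∈ Finset.range (n+1), cgauss q n k * q ^ (k.choose 2) * (-t) ^ k := by
  induction n with
  | zero =>
    intro t
    simp [qPochFin, cgauss_zero hq 0]
  | succ n ih =>
    intro t
    have choose_succ : ∀ k : ℕ, (k+1).choose 2 = k.choose 2 + k := by
      intro k
      rw [Nat.choose_succ_succ]
      simp [Nat.choose_one_right, Nat.add_comm]
    rw [qPochFin_succ' t n, ih (q * t)]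
    have expand : (∑ k ∈ Finset.range (n+1), cgauss q n k * q ^ (k.choose 2) * (-(q * t)) ^ k)
        * (1 - t)
        = (∑ k ∈ Finset.range (n+1), cgauss q n k * q ^ (k.choose 2 + k) * (-t) ^ k)
          + ∑ k ∈ Finset.range (n+1), cgauss q n k * q ^ ((k+1).choose 2) * (-t) ^ (k+1) := by
      rw [Finset.sum_mul, ← Finset.sum_add_distrib]
      apply Finset.sum_congr rfl
      intro k _
      rw [choose_succ k]
      ring
    rw [expand]
    -- decompose left sums
    rw [Finset.sum_range_succ' (fun k => cgauss q n k * q ^ (k.choose 2 + k) * (-t) ^ k) n]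
    rw [Finset.sum_range_succ (fun k => cgauss q n k * q ^ ((k+1).choose 2) * (-t) ^ (k+1)) n]
    -- decompose right sum
    rw [Finset.sum_range_succ' (fun k => cgauss q (n+1) k * q ^ (k.choose 2) * (-t) ^ k) (n+1)]
    rw [Finset.sum_range_succ (fun k => cgauss q (n+1) (k+1) * q ^ ((k+1).choose 2) * (-t) ^ (k+1)) n]
    have h0l : cgauss q n 0 * q ^ ((0:ℕ).choose 2 + 0) * (-t) ^ (0:ℕ) = 1 := by
      rw [cgauss_zero hq]; norm_num
    have h0r : cgauss q (n+1) 0 * q ^ ((0:ℕ).choose 2) * (-t) ^ (0:ℕ) = 1 := by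
      rw [cgauss_zero hq]; norm_num
    have hlast : cgauss q n n * q ^ ((n+1).choose 2) * (-t) ^ (n+1)
        = cgauss q (n+1) (n+1) * q ^ ((n+1).choose 2) * (-t) ^ (n+1) := by
      rw [cgauss_self hq, cgauss_self hq]
    have hmid : ∀ k ∈ Finset.range n,
        cgauss q n (k+1) * q ^ ((k+1).choose 2 + (k+1)) * (-t) ^ (k+1)
          + cgauss q n k * q ^ ((k+1).choose 2) * (-t) ^ (k+1)
        = cgauss q (n+1) (k+1) * q ^ ((k+1).choose 2) * (-t) ^ (k+1) := by
      intro k hk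
      have hk' : k < n := Finset.mem_range.mp hk
      obtain ⟨j, hj⟩ : ∃ j, n = k + j + 1 := ⟨n - k - 1, by omega⟩
      subst hj
      rw [show k+j+1+1 = k+j+2 from rfl, cgauss_pascal hq k j]
      ring
    have hsum : ∑ k ∈ Finset.range n,
          (cgauss q n (k+1) * q ^ ((k+1).choose 2 + (k+1)) * (-t) ^ (k+1)
            + cgauss q n k * q ^ ((k+1).choose 2) * (-t) ^ (k+1))
        = ∑ k ∈ Finset.range n, cgauss q (n+1) (k+1) * q ^ ((k+1).choose 2) * (-t) ^ (k+1) :=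
      Finset.sum_congr rfl hmid
    rw [Finset.sum_add_distrib] at hsum
    simp only [h0l, h0r]
    rw [hlast]
    linear_combination hsum
end GaussThm

section FinJTP
variable {q x : ℂ}

noncomputable def fJ (q x : ℂ) (N : ℕ) (m : ℤ) : ℂ :=
  if -(N:ℤ) ≤ m ∧ m ≤ N then
    (-1:ℂ)^m * cgauss q (2*N) (m + N).toNat * q^(m*(m-1)/2) * x^m else 0

lemma choose_two_cast (k : ℕ) : 2 * ((k.choose 2 : ℕ) : ℤ) = (k:ℤ) * ((k:ℤ)-1) := by
  rcases k with _ | j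
  · simp
  · have h : Even ((j+1) * j) := by rw [mul_comm]; exact Nat.even_mul_succ_self j
    have h2 : 2 * ((j+1) * j / 2) = (j+1) * j := Nat.two_mul_div_two_of_even h
    have h4 : (2:ℤ) * ((((j+1) * j / 2 : ℕ)) : ℤ) = ((j+1):ℤ) * (j:ℤ) := by
      exact_mod_cast congrArg (Nat.cast : ℕ → ℤ) h2
    rw [Nat.choose_two_right, Nat.add_sub_cancel]
    push_cast at h4 ⊢
    linarith

-- the product splitting identity
lemma prod_split (hq0 : q ≠ 0) (hx : x ≠ 0) (N : ℕ) :
    qPochFin (x * (q^N)⁻¹) q (2*N) =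
      (-x)^N * (q ^ (∑ i ∈ Finset.range N, (N - i)))⁻¹ *
        (qPochFin x q N * qPochFin (q/x) q N) := by
  rw [two_mul, qPochFin, Finset.prod_range_add]
  have h2 : ∏ i ∈ Finset.range N, (1 - q^(N+i) * (x * (q^N)⁻¹)) = qPochFin x q N := by
    apply Finset.prod_congr rfl
    intro i _
    rw [pow_add]
    field_simp
  have h1 : ∏ i ∈ Finset.range N, (1 - q^i * (x * (q^N)⁻¹)) =
      (-x)^N * (q ^ (∑ i ∈ Finset.range N, (N - i)))⁻¹ * qPochFin (q/x) q N := by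
    have step : ∏ i ∈ Finset.range N, (1 - q^i * (x * (q^N)⁻¹)) =
        ∏ i ∈ Finset.range N, ((-x) * (q^(N-i))⁻¹ * (1 - q^(N-1-i) * (q/x))) := by
      apply Finset.prod_congr rfl
      intro i hi
      have hi' : i < N := Finset.mem_range.mp hi
      obtain ⟨j, hj⟩ : ∃ j, N = i + j + 1 := ⟨N - i - 1, by omega⟩
      subst hj
      rw [show i+j+1-i = j+1 from by omega, show i+j+1-1-i = j from by omega]
      rw [show i+j+1 = i + (j+1) from rfl, pow_add]
      have hq1 : q^i ≠ 0 := pow_ne_zero _ hq0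
      have hq2 : q^(j+1) ≠ 0 := pow_ne_zero _ hq0
      field_simp
      ring
    rw [step, Finset.prod_mul_distrib, Finset.prod_mul_distrib]
    congr 1
    · congr 1
      · rw [Finset.prod_const, Finset.card_range]
      · rw [Finset.prod_inv_distrib]
        congr 1
        rw [Finset.prod_pow_eq_pow_sum]
    · rw [qPochFin]
      exact Finset.prod_range_reflect (fun j => 1 - q ^ j * (q / x)) N
  rw [h1, h2]
  ring

lemma exp_identity (N k E : ℕ) (hE : 2*(E:ℤ) = N*(N+1)) (m : ℤ) (hm : m = (k:ℤ) - N) :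
    m*(m-1)/2 = (k.choose 2 : ℤ) - N*k + E := by
  have he : Even (m*(m-1)) := by
    rcases Int.even_or_odd m with h | h
    · exact h.mul_right _
    · exact (h.sub_odd odd_one).mul_left _
  have h2 : 2*(m*(m-1)/2) = m*(m-1) := Int.two_mul_ediv_two_of_even he
  have hcc := choose_two_cast k
  have hpoly : m*(m-1) = 2*((k.choose 2 : ℕ) : ℤ) - 2*((N:ℤ)*k) + 2*E := by
    subst hm
    linear_combination -hcc - hE
  linarith

lemma fJ_scalar (hq0 : q ≠ 0) (hx : x ≠ 0) (N k E : ℕ) (hE : 2*(E:ℤ) = (N:ℤ)*(N+1))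
    (m : ℤ) (hm : m = (k:ℤ) - N) :
    (-1:ℂ)^m * q^(m*(m-1)/2) * x^m
      = q^(k.choose 2) * (-(x * (q^N)⁻¹))^k * (((-x):ℂ)^N * (q^E)⁻¹)⁻¹ := by
  have hone : ((-1:ℂ)) ≠ 0 := by norm_num
  have hqN : (q:ℂ)^N ≠ 0 := pow_ne_zero _ hq0
  have hqE : (q:ℂ)^E ≠ 0 := pow_ne_zero _ hq0
  have hxN : (x:ℂ)^N ≠ 0 := pow_ne_zero _ hx
  have hexp := exp_identity N k E hE m hm
  -- rewrite the zpows
  have e1 : (-1:ℂ)^m = (-1:ℂ)^k * (((-1:ℂ))^N)⁻¹ := by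
    rw [hm, zpow_sub₀ hone, zpow_natCast, zpow_natCast, div_eq_mul_inv]
  have e2 : x^m = x^k * (x^N)⁻¹ := by
    rw [hm, zpow_sub₀ hx, zpow_natCast, zpow_natCast, div_eq_mul_inv]
  have e3 : q^(m*(m-1)/2) = q^(k.choose 2) * (q^(N*k))⁻¹ * q^E := by
    rw [hexp, show ((k.choose 2 : ℕ):ℤ) - (N:ℤ)*k + (E:ℤ)
        = ((k.choose 2 : ℕ):ℤ) + (-(((N*k : ℕ)):ℤ)) + ((E:ℕ):ℤ) from by push_cast; ring,
      zpow_add₀ hq0, zpow_add₀ hq0, zpow_neg, zpow_natCast, zpow_natCast, zpow_natCast]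
  rw [e1, e2, e3]
  have e4 : (-(x * (q^N)⁻¹))^k = (-1:ℂ)^k * x^k * ((q^N)^k)⁻¹ := by
    rw [show -(x * (q^N)⁻¹) = (-1) * x * ((q^N))⁻¹ from by ring, mul_pow, mul_pow, inv_pow]
  rw [e4, ← pow_mul]
  rw [neg_pow x N]
  field_simp

lemma finJTP {q x : ℂ} (hq : ‖q‖ < 1) (hq0 : q ≠ 0) (hx : x ≠ 0) (N : ℕ) :
    ∑' m : ℤ, fJ q x N m = qPochFin x q N * qPochFin (q/x) q N := by
  classical
  set E := ∑ i ∈ Finset.range N, (N - i) with hEdef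
  have hE : 2*(E:ℤ) = (N:ℤ)*(N+1) := by
    have : ∑ i ∈ Finset.range N, (N - i) = ∑ i ∈ Finset.range N, (i + 1) := by
      rw [← Finset.sum_range_reflect (fun i => i + 1) N]
      apply Finset.sum_congr rfl
      intro i hi
      have := Finset.mem_range.mp hi
      omega
    rw [hEdef, this, Finset.sum_add_distrib, Finset.sum_const, Finset.card_range,
      smul_eq_mul, mul_one]
    have h1 : (∑ i ∈ Finset.range N, i) * 2 = N * (N-1) := Finset.sum_range_id_mul_two N
    rcases N with _ | M
    · simp
    · push_cast [Nat.add_sub_cancel] at h1 ⊢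
      push_cast at h1
      linarith
  set C : ℂ := ((-x):ℂ)^N * (q^E)⁻¹ with hCdef
  have hC : C ≠ 0 := by
    apply mul_ne_zero (pow_ne_zero _ (neg_ne_zero.mpr hx)) (inv_ne_zero (pow_ne_zero _ hq0))
  have step1 : ∑' m : ℤ, fJ q x N m = ∑ m ∈ Finset.Icc (-(N:ℤ)) N, fJ q x N m := by
    apply tsum_eq_sum
    intro m hm
    rw [Finset.mem_Icc] at hm
    rw [fJ, if_neg (by omega)]
  have step2 : ∑ m ∈ Finset.Icc (-(N:ℤ)) N, fJ q x N m
      = ∑ k ∈ Finset.range (2*N+1),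
          cgauss q (2*N) k * (q^(k.choose 2) * (-(x * (q^N)⁻¹))^k * C⁻¹) := by
    apply Finset.sum_nbij' (fun m => (m + (N:ℤ)).toNat) (fun k => (k:ℤ) - N)
    · intro m hm
      rw [Finset.mem_Icc] at hm
      rw [Finset.mem_range]
      omega
    · intro k hk
      rw [Finset.mem_range] at hk
      rw [Finset.mem_Icc]
      omega
    · intro m hm
      rw [Finset.mem_Icc] at hm
      omega
    · intro k hk
      rw [Finset.mem_range] at hk
      omega
    · intro m hm
      rw [Finset.mem_Icc] at hm
      rw [fJ, if_pos (by omega)]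
      have hk : (((m + (N:ℤ)).toNat : ℕ) : ℤ) = m + N := by omega
      rw [show (-1:ℂ)^m * cgauss q (2*N) ((m + (N:ℤ)).toNat) * q^(m*(m-1)/2) * x^m
          = cgauss q (2*N) ((m + (N:ℤ)).toNat) * ((-1:ℂ)^m * q^(m*(m-1)/2) * x^m) from by ring]
      rw [fJ_scalar hq0 hx N ((m + (N:ℤ)).toNat) E hE m (by omega)]
  have step3 : ∑ k ∈ Finset.range (2*N+1),
        cgauss q (2*N) k * (q^(k.choose 2) * (-(x * (q^N)⁻¹))^k * C⁻¹)
      = (∑ k ∈ Finset.range (2*N+1),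
          cgauss q (2*N) k * q^(k.choose 2) * (-(x * (q^N)⁻¹))^k) * C⁻¹ := by
    rw [Finset.sum_mul]
    apply Finset.sum_congr rfl
    intro k _
    ring
  rw [step1, step2, step3, ← gauss_binomial hq (2*N) (x * (q^N)⁻¹), prod_split hq0 hx N]
  rw [← hEdef, ← hCdef]
  field_simp

end FinJTP

section JTPLimit
variable {q x : ℂ}

lemma halfsq_nonneg (m : ℤ) : 0 ≤ m*(m-1) := by
  rcases le_or_gt m 0 with h | h
  · nlinarith
  · nlinarith

lemma two_mul_halfsq (m : ℤ) : 2 * (m*(m-1)/2) = m*(m-1) := by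
  apply Int.two_mul_ediv_two_of_even
  rcases Int.even_or_odd m with h | h
  · exact h.mul_right _
  · exact (h.sub_odd odd_one).mul_left _

-- summability of the dominating series
lemma theta_bound_summable {r c : ℝ} (hr0 : 0 < r) (hr : r < 1) (hc : 0 < c) :
    Summable (fun m : ℤ => r ^ ((m*(m-1)/2).toNat) * c ^ (m : ℤ)) := by
  have key : ∀ m : ℤ, r ^ ((m*(m-1)/2).toNat) * c ^ (m:ℤ) = r ^ (m*(m-1)/2 : ℤ) * c ^ (m:ℤ) := by
    intro m
    have hnn : 0 ≤ m*(m-1)/2 := Int.ediv_nonneg (halfsq_nonneg m) (by norm_num)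
    rw [← zpow_natCast r ((m*(m-1)/2).toNat), Int.toNat_of_nonneg hnn]
  simp only [key]
  have hfpos : ∀ a b : ℤ, (0:ℝ) < r ^ a * c ^ b :=
    fun a b => mul_pos (zpow_pos hr0 a) (zpow_pos hc b)
  apply Summable.of_nat_of_neg
  · apply summable_of_ratio_norm_eventually_le (show (1:ℝ)/2 < 1 by norm_num)
    have h0 : Tendsto (fun n : ℕ => r ^ n * c) atTop (nhds 0) := by
      simpa using (tendsto_pow_atTop_nhds_zero_of_lt_one hr0.le hr).mul_const c
    filter_upwards [h0.eventually_le_const (by norm_num : (0:ℝ) < 1/2)] with n hn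
    have he : ((n:ℤ)+1)*((n:ℤ)+1-1)/2 = (n:ℤ)*((n:ℤ)-1)/2 + n := by
      have h1 := two_mul_halfsq ((n:ℤ)+1)
      have h2 := two_mul_halfsq (n:ℤ)
      have h3 : ((n:ℤ)+1)*((n:ℤ)+1-1) - (n:ℤ)*((n:ℤ)-1) = 2*(n:ℤ) := by ring
      omega
    push_cast
    rw [Real.norm_of_nonneg (hfpos _ _).le, Real.norm_of_nonneg (hfpos _ _).le, he]
    have h1 : r ^ ((n:ℤ)*((n:ℤ)-1)/2 + (n:ℤ)) * c ^ ((n:ℤ)+1)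
        = (r ^ (n:ℤ) * c) * (r ^ ((n:ℤ)*((n:ℤ)-1)/2) * c ^ (n:ℤ)) := by
      rw [zpow_add₀ hr0.ne', zpow_add₀ hc.ne', zpow_one]
      ring
    rw [h1]
    have h2 : r ^ (n:ℤ) * c ≤ 1/2 := by rw [zpow_natCast]; exact hn
    exact mul_le_mul_of_nonneg_right h2 (hfpos _ _).le
  · apply summable_of_ratio_norm_eventually_le (show (1:ℝ)/2 < 1 by norm_num)
    have h0 : Tendsto (fun n : ℕ => r ^ (n+1) * c⁻¹) atTop (nhds 0) := by
      have := (tendsto_pow_atTop_nhds_zero_of_lt_one hr0.le hr).comp (tendsto_add_atTop_nat 1)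
      simpa [Function.comp] using this.mul_const c⁻¹
    filter_upwards [h0.eventually_le_const (by norm_num : (0:ℝ) < 1/2)] with n hn
    have he : (-((n:ℤ)+1))*(-((n:ℤ)+1)-1)/2 = (-(n:ℤ))*(-(n:ℤ)-1)/2 + ((n:ℤ)+1) := by
      have h1 := two_mul_halfsq (-((n:ℤ)+1))
      have h2 := two_mul_halfsq (-(n:ℤ))
      have h3 : (-((n:ℤ)+1))*(-((n:ℤ)+1)-1) - (-(n:ℤ))*(-(n:ℤ)-1) = 2*((n:ℤ)+1) := by ring
      omega
    push_cast
    rw [Real.norm_of_nonneg (hfpos _ _).le, Real.norm_of_nonneg (hfpos _ _).le, he]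
    have h1 : r ^ ((-(n:ℤ))*(-(n:ℤ)-1)/2 + ((n:ℤ)+1)) * c ^ (-((n:ℤ)+1))
        = (r ^ ((n:ℤ)+1) * c⁻¹) * (r ^ ((-(n:ℤ))*(-(n:ℤ)-1)/2) * c ^ (-(n:ℤ))) := by
      rw [zpow_add₀ hr0.ne', show -((n:ℤ)+1) = -(n:ℤ) + (-1) from by ring,
        zpow_add₀ hc.ne']
      simp only [zpow_neg, zpow_one]
      ring
    rw [h1]
    have h2 : r ^ ((n:ℤ)+1) * c⁻¹ ≤ 1/2 := by
      rw [show ((n:ℤ)+1) = ((n+1 : ℕ) : ℤ) from by push_cast; ring, zpow_natCast]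
      exact hn
    exact mul_le_mul_of_nonneg_right h2 (hfpos _ _).le
end JTPLimit

section JTP
variable {q x : ℂ}

lemma cgauss_bound {q : ℂ} (hq : ‖q‖ < 1) :
    ∃ B : ℝ, 0 < B ∧ ∀ n k, ‖cgauss q n k‖ ≤ B := by
  obtain ⟨c, hc, hle⟩ := qPochFin_q_lower hq
  refine ⟨Real.exp (‖q‖/(1-‖q‖)) / (c * c), by positivity, fun n k => ?_⟩
  rw [cgauss, norm_div, norm_mul]
  apply div_le_div₀ (by positivity) (qPochFin_upper hq q n) (by positivity)
  exact mul_le_mul (hle k) (hle (n-k)) hc.le (le_trans hc.le (hle k))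

lemma tendsto_cgauss {q : ℂ} (hq : ‖q‖ < 1) (m : ℤ) :
    Tendsto (fun N : ℕ => cgauss q (2*N) ((m + (N:ℤ)).toNat)) atTop
      (nhds ((qPochInf q q)⁻¹)) := by
  have hP : Tendsto (fun n => qPochFin q q n) atTop (nhds (qPochInf q q)) :=
    tendsto_qPochFin hq q
  have hPne : qPochInf q q ≠ 0 := qPochInf_q_ne_zero hq
  have t1 : Tendsto (fun N : ℕ => 2*N) atTop atTop :=
    tendsto_atTop_atTop.mpr (fun b => ⟨b, fun a ha => by omega⟩)
  have t2 : Tendsto (fun N : ℕ => (m + (N:ℤ)).toNat) atTop atTop :=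
    tendsto_atTop_atTop.mpr (fun b => ⟨b + m.natAbs, fun a ha => by omega⟩)
  have t3 : Tendsto (fun N : ℕ => 2*N - (m + (N:ℤ)).toNat) atTop atTop :=
    tendsto_atTop_atTop.mpr (fun b => ⟨b + 2 * m.natAbs, fun a ha => by omega⟩)
  have key : Tendsto (fun N : ℕ => cgauss q (2*N) ((m + (N:ℤ)).toNat)) atTop
      (nhds (qPochInf q q / (qPochInf q q * qPochInf q q))) := by
    simp only [cgauss]
    exact Tendsto.div (hP.comp t1) ((hP.comp t2).mul (hP.comp t3))
      (mul_ne_zero hPne hPne)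
  have : qPochInf q q / (qPochInf q q * qPochInf q q) = (qPochInf q q)⁻¹ := by
    field_simp
  rwa [this] at key

theorem jtp {q x : ℂ} (hq : ‖q‖ < 1) (hq0 : q ≠ 0) (hx : x ≠ 0) :
    jt x q = ∑' m : ℤ, (-1:ℂ)^m * q^(m*(m-1)/2) * x^m := by
  have hr0 : 0 < ‖q‖ := norm_pos_iff.mpr hq0
  have hx0 : 0 < ‖x‖ := norm_pos_iff.mpr hx
  obtain ⟨B, hB, hBle⟩ := cgauss_bound hq
  have hPne : qPochInf q q ≠ 0 := qPochInf_q_ne_zero hq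
  -- norm identity for the theta term
  have hnorm : ∀ m : ℤ, ‖(-1:ℂ)^m * q^(m*(m-1)/2) * x^m‖
      = ‖q‖ ^ ((m*(m-1)/2).toNat) * ‖x‖ ^ (m:ℤ) := by
    intro m
    have hnn : 0 ≤ m*(m-1)/2 := Int.ediv_nonneg (halfsq_nonneg m) (by norm_num)
    rw [norm_mul, norm_mul, norm_zpow, norm_zpow, norm_zpow]
    rw [show ‖(-1:ℂ)‖ = 1 from by simp, one_zpow, one_mul]
    congr 1
    rw [← zpow_natCast ‖q‖ ((m*(m-1)/2).toNat), Int.toNat_of_nonneg hnn]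
  have hsummable : Summable (fun m : ℤ => B * (‖q‖ ^ ((m*(m-1)/2).toNat) * ‖x‖ ^ (m:ℤ))) :=
    (theta_bound_summable hr0 hq hx0).mul_left B
  -- dominated convergence
  have hab : ∀ m : ℤ, Tendsto (fun N : ℕ => fJ q x N m) atTop
      (nhds ((qPochInf q q)⁻¹ * ((-1:ℂ)^m * q^(m*(m-1)/2) * x^m))) := by
    intro m
    have base : Tendsto (fun N : ℕ =>
        (-1:ℂ)^m * cgauss q (2*N) ((m + (N:ℤ)).toNat) * q^(m*(m-1)/2) * x^m) atTop
        (nhds ((-1:ℂ)^m * (qPochInf q q)⁻¹ * q^(m*(m-1)/2) * x^m)) := by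
      exact (((tendsto_cgauss hq m).const_mul ((-1:ℂ)^m)).mul_const
        (q^(m*(m-1)/2))).mul_const (x^m)
    have heq : ∀ᶠ N : ℕ in atTop, (-1:ℂ)^m * cgauss q (2*N) ((m + (N:ℤ)).toNat)
        * q^(m*(m-1)/2) * x^m = fJ q x N m := by
      filter_upwards [eventually_ge_atTop m.natAbs] with N hN
      rw [fJ, if_pos (by omega)]
    have := base.congr' heq
    convert this using 2
    ring
  have h_bound : ∀ᶠ N : ℕ in atTop, ∀ m : ℤ,
      ‖fJ q x N m‖ ≤ B * (‖q‖ ^ ((m*(m-1)/2).toNat) * ‖x‖ ^ (m:ℤ)) := by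
    apply Eventually.of_forall
    intro N m
    rw [fJ]
    split_ifs with h
    · rw [show (-1:ℂ)^m * cgauss q (2*N) ((m + (N:ℤ)).toNat) * q^(m*(m-1)/2) * x^m
          = cgauss q (2*N) ((m + (N:ℤ)).toNat) * ((-1:ℂ)^m * q^(m*(m-1)/2) * x^m)
          from by ring, norm_mul, hnorm m]
      apply mul_le_mul (hBle _ _) le_rfl (by positivity) hB.le
    · rw [norm_zero]
      positivity
  have hdom := tendsto_tsum_of_dominated_convergence hsummable hab h_bound
  -- identify the limit of the partial sums
  have heq2 : ∀ N : ℕ, ∑' m : ℤ, fJ q x N m = qPochFin x q N * qPochFin (q/x) q N :=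
    finJTP hq hq0 hx
  have hlim2 : Tendsto (fun N : ℕ => ∑' m : ℤ, fJ q x N m) atTop
      (nhds (qPochInf x q * qPochInf (q/x) q)) := by
    rw [funext heq2]
    exact (tendsto_qPochFin hq x).mul (tendsto_qPochFin hq (q/x))
  have huniq : qPochInf x q * qPochInf (q/x) q
      = ∑' m : ℤ, (qPochInf q q)⁻¹ * ((-1:ℂ)^m * q^(m*(m-1)/2) * x^m) :=
    tendsto_nhds_unique hlim2 hdom
  rw [tsum_mul_left] at huniq
  rw [jt, huniq]
  field_simp

lemma theta_summable_norm {q x : ℂ} (hq : ‖q‖ < 1) (hq0 : q ≠ 0) (hx : x ≠ 0) :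
    Summable (fun m : ℤ => ‖(-1:ℂ)^m * q^(m*(m-1)/2) * x^m‖) := by
  have hr0 : 0 < ‖q‖ := norm_pos_iff.mpr hq0
  have hx0 : 0 < ‖x‖ := norm_pos_iff.mpr hx
  apply Summable.congr (theta_bound_summable hr0 hq hx0)
  intro m
  have hnn : 0 ≤ m*(m-1)/2 := Int.ediv_nonneg (halfsq_nonneg m) (by norm_num)
  rw [norm_mul, norm_mul, norm_zpow, norm_zpow, norm_zpow]
  rw [show ‖(-1:ℂ)‖ = 1 from by simp, one_zpow, one_mul]
  congr 1
  rw [← zpow_natCast ‖q‖ ((m*(m-1)/2).toNat), Int.toNat_of_nonneg hnn]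

end JTP

section Main
variable {q x y : ℂ}

lemma neg_one_zpow_self_mul (t : ℤ) : ((-1:ℂ))^t * ((-1:ℂ))^t = 1 := by
  rw [← mul_zpow]
  norm_num

lemma neg_one_zpow_sub (s t : ℤ) : ((-1:ℂ))^(s-t) = ((-1:ℂ))^s * ((-1:ℂ))^t := by
  have h1 : ((-1:ℂ))^((2:ℤ)*t) = 1 := by
    rw [zpow_mul]
    norm_num
  have hne : ((-1:ℂ)) ≠ 0 := by norm_num
  calc ((-1:ℂ))^(s-t) = ((-1:ℂ))^(s-t) * ((-1:ℂ))^((2:ℤ)*t) := by rw [h1, mul_one]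
    _ = ((-1:ℂ))^(s+t) := by rw [← zpow_add₀ hne]; congr 1; ring
    _ = ((-1:ℂ))^s * ((-1:ℂ))^t := zpow_add₀ hne s t

lemma jt_symm (z w : ℂ) (hz : z ≠ 0) (hw : w ≠ 0) : jt z w = jt (w/z) w := by
  rw [jt, jt, show w/(w/z) = z from by field_simp]
  ring

lemma key_alg (hq0 : q ≠ 0) (hx : x ≠ 0) (hy : y ≠ 0) (s t : ℤ) :
    q^((s+t)*((s+t)-1)/2) * x^(s+t) * ((-1:ℂ)^(s-t) * q^((s-t)*((s-t)-1)/2) * y^(s-t))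
      + (-1:ℂ)^(s+t) * q^((s+t)*((s+t)-1)/2) * x^(s+t)
          * (q^((s-t)*((s-t)-1)/2) * y^(s-t))
    = 2 * (((-1:ℂ)^s * (q^2)^(s*(s-1)/2) * (x*y)^s)
        * ((-1:ℂ)^t * (q^2)^(t*(t-1)/2) * ((q*x*y⁻¹))^t)) := by
  have hne : ((-1:ℂ)) ≠ 0 := by norm_num
  have hqe : q^((s+t)*((s+t)-1)/2) * q^((s-t)*((s-t)-1)/2)
      = q^((2:ℤ)*(s*(s-1)/2)) * q^((2:ℤ)*(t*(t-1)/2)) * q^t := by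
    rw [← zpow_add₀ hq0, ← zpow_add₀ hq0, ← zpow_add₀ hq0]
    congr 1
    have h1 := two_mul_halfsq (s+t)
    have h2 := two_mul_halfsq (s-t)
    have h3 := two_mul_halfsq s
    have h4 := two_mul_halfsq t
    have h5 : (s+t)*((s+t)-1) + (s-t)*((s-t)-1)
        = s*(s-1) + s*(s-1) + (t*(t-1) + t*(t-1) + 2*t) := by ring
    omega
  have e1 : (q^2 : ℂ)^(s*(s-1)/2) = q^((2:ℤ)*(s*(s-1)/2)) := by
    rw [← zpow_natCast q 2, ← zpow_mul]
    norm_num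
  have e2 : (q^2 : ℂ)^(t*(t-1)/2) = q^((2:ℤ)*(t*(t-1)/2)) := by
    rw [← zpow_natCast q 2, ← zpow_mul]
    norm_num
  have e3 : (x*y)^s = x^s * y^s := mul_zpow x y s
  have e4 : (q*x*y⁻¹)^t = q^t * x^t * (y^t)⁻¹ := by
    rw [mul_zpow, mul_zpow, inv_zpow]
  have e5 : x^(s+t) = x^s * x^t := zpow_add₀ hx s t
  have e6 : y^(s-t) = y^s * (y^t)⁻¹ := by
    rw [zpow_sub₀ hy, div_eq_mul_inv]
  have e7 : ((-1:ℂ))^(s+t) = ((-1:ℂ))^s * ((-1:ℂ))^t := zpow_add₀ hne s t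
  have e8 := neg_one_zpow_sub s t
  rw [e1, e2, e3, e4, e5, e6, e7, e8]
  linear_combination (2 * ((-1:ℂ))^s * ((-1:ℂ))^t * (x^s * x^t * (y^s * (y^t)⁻¹))) * hqe

theorem jt_sum_expansion_aux (hq : ‖q‖ < 1) (hq0 : q ≠ 0) (hx : x ≠ 0) (hy : y ≠ 0) :
    jt (-x) q * jt y q + jt x q * jt (-y) q =
      2 * jt (x * y) (q ^ 2) * jt (q * x⁻¹ * y) (q ^ 2) := by
  have hq2 : ‖q^2‖ < 1 := by
    rw [norm_pow]
    exact pow_lt_one₀ (norm_nonneg q) hq (by omega)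
  have hq20 : (q:ℂ)^2 ≠ 0 := pow_ne_zero _ hq0
  have hxy : x * y ≠ 0 := mul_ne_zero hx hy
  have hv0 : q * x * y⁻¹ ≠ 0 := mul_ne_zero (mul_ne_zero hq0 hx) (inv_ne_zero hy)
  -- series representations
  set f1 : ℤ → ℂ := fun m => q^(m*(m-1)/2) * x^m with hf1def
  set g1 : ℤ → ℂ := fun n => (-1:ℂ)^n * q^(n*(n-1)/2) * y^n with hg1def
  set f2 : ℤ → ℂ := fun m => (-1:ℂ)^m * q^(m*(m-1)/2) * x^m with hf2def
  set g2 : ℤ → ℂ := fun n => q^(n*(n-1)/2) * y^n with hg2def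
  have hjt1 : jt (-x) q = ∑' m : ℤ, f1 m := by
    rw [jtp hq hq0 (neg_ne_zero.mpr hx)]
    apply tsum_congr
    intro m
    rw [hf1def]
    calc (-1:ℂ)^m * q^(m*(m-1)/2) * (-x)^m
        = ((-1:ℂ)^m * (-x)^m) * q^(m*(m-1)/2) := by ring
      _ = ((-1)*(-x))^m * q^(m*(m-1)/2) := by rw [mul_zpow]
      _ = x^m * q^(m*(m-1)/2) := by norm_num
      _ = q^(m*(m-1)/2) * x^m := by ring
  have hjt2 : jt y q = ∑' n : ℤ, g1 n := jtp hq hq0 hy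
  have hjt3 : jt x q = ∑' m : ℤ, f2 m := jtp hq hq0 hx
  have hjt4 : jt (-y) q = ∑' n : ℤ, g2 n := by
    rw [jtp hq hq0 (neg_ne_zero.mpr hy)]
    apply tsum_congr
    intro n
    rw [hg2def]
    calc (-1:ℂ)^n * q^(n*(n-1)/2) * (-y)^n
        = ((-1:ℂ)^n * (-y)^n) * q^(n*(n-1)/2) := by ring
      _ = ((-1)*(-y))^n * q^(n*(n-1)/2) := by rw [mul_zpow]
      _ = y^n * q^(n*(n-1)/2) := by norm_num
      _ = q^(n*(n-1)/2) * y^n := by ring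
  -- summability of norms
  have hnf1 : Summable (fun m : ℤ => ‖f1 m‖) := by
    apply Summable.congr (theta_summable_norm hq hq0 hx)
    intro m
    rw [hf1def]
    simp only [norm_mul, norm_zpow]
    rw [show ‖(-1:ℂ)‖ = 1 from by simp, one_zpow, one_mul]
  have hng1 : Summable (fun n : ℤ => ‖g1 n‖) := theta_summable_norm hq hq0 hy
  have hnf2 : Summable (fun m : ℤ => ‖f2 m‖) := theta_summable_norm hq hq0 hx
  have hng2 : Summable (fun n : ℤ => ‖g2 n‖) := by
    apply Summable.congr (theta_summable_norm hq hq0 hy)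
    intro n
    rw [hg2def]
    simp only [norm_mul, norm_zpow]
    rw [show ‖(-1:ℂ)‖ = 1 from by simp, one_zpow, one_mul]
  -- double sums
  have hd1 : jt (-x) q * jt y q = ∑' p : ℤ × ℤ, f1 p.1 * g1 p.2 := by
    rw [hjt1, hjt2]
    exact tsum_mul_tsum_of_summable_norm hnf1 hng1
  have hd2 : jt x q * jt (-y) q = ∑' p : ℤ × ℤ, f2 p.1 * g2 p.2 := by
    rw [hjt3, hjt4]
    exact tsum_mul_tsum_of_summable_norm hnf2 hng2
  have hs1 : Summable (fun p : ℤ × ℤ => f1 p.1 * g1 p.2) :=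
    summable_mul_of_summable_norm hnf1 hng1
  have hs2 : Summable (fun p : ℤ × ℤ => f2 p.1 * g2 p.2) :=
    summable_mul_of_summable_norm hnf2 hng2
  set T : ℤ × ℤ → ℂ := fun p => f1 p.1 * g1 p.2 + f2 p.1 * g2 p.2 with hTdef
  have hTs : Summable T := hs1.add hs2
  have hsum : jt (-x) q * jt y q + jt x q * jt (-y) q = ∑' p : ℤ × ℤ, T p := by
    rw [hd1, hd2, hTdef, Summable.tsum_add hs1 hs2]
  -- reindex along (s,t) ↦ (s+t, s-t)
  set e : ℤ × ℤ → ℤ × ℤ := fun p => (p.1 + p.2, p.1 - p.2) with hedef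
  have hinj : Function.Injective e := by
    intro p p' h
    rw [hedef, Prod.ext_iff] at h
    simp only at h
    have := h.1
    have := h.2
    ext
    · omega
    · omega
  have hsupp : ∀ p : ℤ × ℤ, p ∉ Set.range e → T p = 0 := by
    rintro ⟨m, n⟩ hp
    have hodd : Odd (m + n) := by
      rcases Int.even_or_odd (m+n) with h | h
      · exfalso
        obtain ⟨k, hk⟩ := h
        exact hp ⟨(k, m - k), by rw [hedef]; ext <;> simp <;> omega⟩
      · exact h
    have hsign : (-1:ℂ)^n + (-1:ℂ)^m = 0 := by
      obtain ⟨k, hk⟩ := hodd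
      have hm : m = (2*k+1) - n := by omega
      have : ((-1:ℂ))^m = -((-1:ℂ))^n := by
        rw [hm, show (2*k+1) - n = (n + (2*(k-n) + 1) : ℤ) from by ring,
          zpow_add₀ (by norm_num : (-1:ℂ) ≠ 0),
          show (2*(k-n)+1 : ℤ) = 2*(k-n) + 1 from rfl,
          zpow_add₀ (by norm_num : (-1:ℂ) ≠ 0), zpow_mul]
        norm_num
      rw [this]
      ring
    rw [hTdef]
    simp only
    rw [hf1def, hg1def, hf2def, hg2def]
    have : q^(m*(m-1)/2) * x^m * ((-1:ℂ)^n * q^(n*(n-1)/2) * y^n)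
        + (-1:ℂ)^m * q^(m*(m-1)/2) * x^m * (q^(n*(n-1)/2) * y^n)
        = ((-1:ℂ)^n + (-1:ℂ)^m) * (q^(m*(m-1)/2) * x^m * q^(n*(n-1)/2) * y^n) := by
      ring
    rw [this, hsign, zero_mul]
  have hreindex : ∑' p : ℤ × ℤ, T p = ∑' p : ℤ × ℤ, T (e p) :=
    ((Function.Injective.hasSum_iff hinj hsupp).mpr hTs.hasSum).tsum_eq.symm
  -- identify with the product of two theta series in q²
  set u : ℤ → ℂ := fun s => (-1:ℂ)^s * (q^2)^(s*(s-1)/2) * (x*y)^s with hudef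
  set v : ℤ → ℂ := fun t => (-1:ℂ)^t * (q^2)^(t*(t-1)/2) * ((q*x*y⁻¹))^t with hvdef
  have hTe : ∀ p : ℤ × ℤ, T (e p) = 2 * (u p.1 * v p.2) := by
    rintro ⟨s, t⟩
    rw [hTdef, hedef, hudef, hvdef]
    simp only
    rw [hf1def, hg1def, hf2def, hg2def]
    exact key_alg hq0 hx hy s t
  have hnu : Summable (fun s : ℤ => ‖u s‖) := theta_summable_norm hq2 hq20 hxy
  have hnv : Summable (fun t : ℤ => ‖v t‖) := theta_summable_norm hq2 hq20 hv0
  have hfinal : ∑' p : ℤ × ℤ, T (e p) = 2 * ((∑' s : ℤ, u s) * (∑' t : ℤ, v t)) := by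
    calc ∑' p : ℤ × ℤ, T (e p) = ∑' p : ℤ × ℤ, 2 * (u p.1 * v p.2) := tsum_congr hTe
      _ = 2 * ∑' p : ℤ × ℤ, u p.1 * v p.2 := tsum_mul_left
      _ = 2 * ((∑' s : ℤ, u s) * (∑' t : ℤ, v t)) := by
          rw [tsum_mul_tsum_of_summable_norm hnu hnv]
  have hu_jt : ∑' s : ℤ, u s = jt (x*y) (q^2) := (jtp hq2 hq20 hxy).symm
  have hv_jt : ∑' t : ℤ, v t = jt (q*x⁻¹*y) (q^2) := by
    rw [(jtp hq2 hq20 hv0).symm]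
    rw [jt_symm _ _ hv0 hq20]
    congr 1
    field_simp
  rw [hsum, hreindex, hfinal, hu_jt, hv_jt]
  ring

end Main

theorem jt_sum_expansion (q x y : ℂ) (hq0 : 0 < ‖q‖)
    (hq1 : ‖q‖ < 1) (hx : x ≠ 0) (hy : y ≠ 0) :
    jt (-x) q * jt y q + jt x q * jt (-y) q =
      2 * jt (x * y) (q ^ 2) * jt (q * x⁻¹ * y) (q ^ 2) := by
  have hq : ‖q‖ < 1 := by exact hq1
  have hq0' : q ≠ 0 := by
    intro h
    rw [h] at hq0
    simp at hq0
  exact jt_sum_expansion_aux hq hq0' hx hy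
end

section
/- For 0<|q|<1 and nonzero x, y: j(x;q) j(y;q^6) = ∑_{i=-2}^{2} (-1)^i q^{(i^2-i)/2} x^i j(-q^{3i+9} x^3 y^{-1}; q^{15}) j(q^{2i+1} x^2 y; q^{10}), where j(x;q) := (x;q)_∞(q/x;q)_∞(q;q)_∞. -/
namespace QJT

noncomputable def gbz (q : ℂ) (n : ℕ) (j : ℤ) : ℂ :=
  if 0 ≤ j ∧ j ≤ n then
    qPochFin q q n / (qPochFin q q j.toNat * qPochFin q q (n - j.toNat)) else 0

variable {q : ℂ} (hq : ‖q‖ < 1)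

lemma qp_succ (x : ℂ) (n : ℕ) : qPochFin x q (n+1) = qPochFin x q n * (1 - q ^ n * x) := by
  simp [qPochFin, Finset.prod_range_succ]

lemma qp_zero (x : ℂ) : qPochFin x q 0 = 1 := by simp [qPochFin]

include hq in
lemma one_sub_qpow_ne (n : ℕ) : (1 : ℂ) - q ^ n * q ≠ 0 := by
  intro h
  have h2 : q ^ n * q = 1 := by linear_combination -h
  have : ‖q ^ n * q‖ < 1 := by
    rw [norm_mul, norm_pow]
    calc ‖q‖ ^ n * ‖q‖ ≤ 1 * ‖q‖ := by
          apply mul_le_mul_of_nonneg_right _ (norm_nonneg q)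
          exact pow_le_one₀ (norm_nonneg q) hq.le
      _ < 1 := by simpa using hq
  rw [h2] at this; simp at this

include hq in
lemma qp_ne (n : ℕ) : qPochFin q q n ≠ 0 := by
  induction n with
  | zero => simp [qPochFin]
  | succ m ih => rw [qp_succ]; exact mul_ne_zero ih (one_sub_qpow_ne hq m)

lemma gbz_neg {n : ℕ} {j : ℤ} (h : j < 0) : gbz q n j = 0 := by
  rw [gbz, if_neg (by omega)]

lemma gbz_gt {n : ℕ} {j : ℤ} (h : (n : ℤ) < j) : gbz q n j = 0 := by
  rw [gbz, if_neg (by omega)]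

include hq in
lemma gbz_zero (n : ℕ) : gbz q n 0 = 1 := by
  rw [gbz, if_pos (by omega)]
  simp only [Int.toNat_zero, Nat.sub_zero, qp_zero, one_mul]
  exact div_self (qp_ne hq n)

include hq in
lemma gbz_self (n : ℕ) : gbz q n (n : ℤ) = 1 := by
  rw [gbz, if_pos (by omega)]
  rw [Int.toNat_natCast, Nat.sub_self, qp_zero, mul_one]
  exact div_self (qp_ne hq n)

include hq in
lemma gbz_pascalA (n : ℕ) (j : ℤ) :
    gbz q (n+1) j = gbz q n j + q ^ ((n:ℤ) + 1 - j) * gbz q n (j-1) := by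
  have hq0 : q ≠ 0 ∨ True := Or.inr trivial
  rcases lt_or_ge j 0 with h | h
  · rw [gbz_neg h, gbz_neg h, gbz_neg (by omega)]; ring
  rcases eq_or_lt_of_le h with h0 | hpos
  · rw [← h0, gbz_zero hq, gbz_zero hq, gbz_neg (by omega)]; ring
  rcases lt_or_ge ((n:ℤ)+1) j with hgt | hle
  · rw [gbz_gt (by push_cast; omega), gbz_gt (by omega), gbz_gt (by omega)]; ring
  rcases eq_or_lt_of_le hle with htop | hin
  · have hjn : j = (n:ℤ)+1 := by omega
    subst hjn
    rw [show ((n:ℤ)+1) = ((n+1:ℕ):ℤ) by push_cast; ring, gbz_self hq,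
      gbz_gt (by push_cast; omega), show ((n+1:ℕ):ℤ) - 1 = (n:ℤ) by push_cast; ring,
      gbz_self hq]
    simp
  · -- main range: j = m'+1, n = m'+1+k
    obtain ⟨m, hj⟩ : ∃ m : ℕ, j = (m:ℤ) := ⟨j.toNat, by omega⟩
    subst hj
    obtain ⟨m', rfl⟩ : ∃ m'', m = m'' + 1 := ⟨m - 1, by omega⟩
    obtain ⟨k, rfl⟩ : ∃ k, n = (m' + 1) + k := ⟨n - (m'+1), by omega⟩
    have hP := qp_ne (q := q) hq
    have hne := one_sub_qpow_ne (q := q) hq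
    rw [gbz, if_pos (by omega), gbz, if_pos (by omega), gbz, if_pos (by omega)]
    rw [show ((m'+1:ℕ):ℤ) - 1 = ((m':ℕ):ℤ) by push_cast; ring]
    rw [Int.toNat_natCast, Int.toNat_natCast]
    rw [show (m'+1+k) + 1 - (m'+1) = k + 1 by omega, show (m'+1+k) - (m'+1) = k by omega,
        show (m'+1+k) - m' = k + 1 by omega]
    rw [show ((m'+1+k:ℕ):ℤ) + 1 - ((m'+1:ℕ):ℤ) = ((k+1:ℕ):ℤ) by push_cast; ring, zpow_natCast]
    rw [← mul_div_assoc,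
        div_add_div _ _ (mul_ne_zero (hP (m'+1)) (hP k)) (mul_ne_zero (hP m') (hP (k+1))),
        div_eq_div_iff (mul_ne_zero (hP (m'+1)) (hP (k+1)))
          (mul_ne_zero (mul_ne_zero (hP (m'+1)) (hP k)) (mul_ne_zero (hP m') (hP (k+1))))]
    rw [show qPochFin q q (m'+1+k+1) = qPochFin q q (m'+1+k) * (1 - q^(m'+1+k) * q) from qp_succ q _,
        show qPochFin q q (m'+1) = qPochFin q q m' * (1 - q^m' * q) from qp_succ q _,
        show qPochFin q q (k+1) = qPochFin q q k * (1 - q^k * q) from qp_succ q _]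
    ring

include hq in
lemma gbz_pascalB (n : ℕ) (j : ℤ) (hq0 : q ≠ 0) :
    gbz q (n+1) j = q ^ j * gbz q n j + gbz q n (j-1) := by
  rcases lt_or_ge j 0 with h | h
  · rw [gbz_neg h, gbz_neg h, gbz_neg (by omega)]; ring
  rcases eq_or_lt_of_le h with h0 | hpos
  · rw [← h0, gbz_zero hq, gbz_zero hq, gbz_neg (by omega)]; simp
  rcases lt_or_ge ((n:ℤ)+1) j with hgt | hle
  · rw [gbz_gt (by push_cast; omega), gbz_gt (by omega), gbz_gt (by omega)]; ring
  rcases eq_or_lt_of_le hle with htop | hin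
  · have hjn : j = (n:ℤ)+1 := by omega
    subst hjn
    rw [show ((n:ℤ)+1) = ((n+1:ℕ):ℤ) by push_cast; ring, gbz_self hq,
      gbz_gt (by push_cast; omega), show ((n+1:ℕ):ℤ) - 1 = (n:ℤ) by push_cast; ring,
      gbz_self hq]
    ring
  · -- main range: j = m'+1, n = m'+1+k
    obtain ⟨m, hj⟩ : ∃ m : ℕ, j = (m:ℤ) := ⟨j.toNat, by omega⟩
    subst hj
    obtain ⟨m', rfl⟩ : ∃ m'', m = m'' + 1 := ⟨m - 1, by omega⟩
    obtain ⟨k, rfl⟩ : ∃ k, n = (m' + 1) + k := ⟨n - (m'+1), by omega⟩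
    have hP := qp_ne (q := q) hq
    have hne := one_sub_qpow_ne (q := q) hq
    rw [gbz, if_pos (by omega), gbz, if_pos (by omega), gbz, if_pos (by omega)]
    rw [show ((m'+1:ℕ):ℤ) - 1 = ((m':ℕ):ℤ) by push_cast; ring]
    rw [Int.toNat_natCast, Int.toNat_natCast]
    rw [show (m'+1+k) + 1 - (m'+1) = k + 1 by omega, show (m'+1+k) - (m'+1) = k by omega,
        show (m'+1+k) - m' = k + 1 by omega]
    rw [zpow_natCast]
    rw [← mul_div_assoc,
        div_add_div _ _ (mul_ne_zero (hP (m'+1)) (hP k)) (mul_ne_zero (hP m') (hP (k+1))),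
        div_eq_div_iff (mul_ne_zero (hP (m'+1)) (hP (k+1)))
          (mul_ne_zero (mul_ne_zero (hP (m'+1)) (hP k)) (mul_ne_zero (hP m') (hP (k+1))))]
    rw [show qPochFin q q (m'+1+k+1) = qPochFin q q (m'+1+k) * (1 - q^(m'+1+k) * q) from qp_succ q _,
        show qPochFin q q (m'+1) = qPochFin q q m' * (1 - q^m' * q) from qp_succ q _,
        show qPochFin q q (k+1) = qPochFin q q k * (1 - q^k * q) from qp_succ q _]
    ring

/-- The theta series term. -/
noncomputable def tt (q x : ℂ) (k : ℤ) : ℂ := (-1)^k * q^(k*(k-1)/2) * x^k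

lemma tt_zero (q x : ℂ) : tt q x 0 = 1 := by simp [tt]

variable {x : ℂ}

lemma tt_succ (hq0 : q ≠ 0) (hx : x ≠ 0) (k : ℤ) :
    tt q x (k+1) = -(q^k * x * tt q x k) := by
  unfold tt
  have he : (k+1)*(k+1-1)/2 = k*(k-1)/2 + k := by
    rw [show (k+1)*(k+1-1) = k*(k-1) + k*2 by ring, Int.add_mul_ediv_right _ _ (by norm_num)]
  rw [he, zpow_add₀ hq0, zpow_add₀ (by norm_num : (-1:ℂ) ≠ 0), zpow_add₀ hx]
  simp only [zpow_one]
  ring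

lemma tt_pred (hq0 : q ≠ 0) (hx : x ≠ 0) (k : ℤ) :
    tt q x (k-1) = -(q^(1-k) * x⁻¹ * tt q x k) := by
  have h := tt_succ (q := q) (x := x) hq0 hx (k-1)
  rw [sub_add_cancel] at h
  rw [h, show -(q^(1-k) * x⁻¹ * -(q^(k-1) * x * tt q x (k-1)))
      = (q^(1-k) * q^(k-1)) * (x⁻¹ * x) * tt q x (k-1) by ring,
    ← zpow_add₀ hq0, show (1-k) + (k-1) = 0 by ring, zpow_zero, inv_mul_cancel₀ hx]
  ring

lemma tt_mul_M (hq0 : q ≠ 0) (hx : x ≠ 0) (k : ℤ) (N : ℕ) :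
    tt q x k * ((1 - q^(N:ℤ) * x) * (1 - q^((N:ℤ)+1) * x⁻¹)) =
      (1 + q^(2*(N:ℤ)+1)) * tt q x k + q^((N:ℤ)-k) * tt q x (k+1)
        + q^((N:ℤ)+k) * tt q x (k-1) := by
  rw [tt_succ hq0 hx, tt_pred hq0 hx]
  have e1 : q^((N:ℤ)-k) * q^k = q^(N:ℤ) := by
    rw [← zpow_add₀ hq0]; congr 1; ring
  have e2 : q^((N:ℤ)+k) * q^(1-k) = q^((N:ℤ)+1) := by
    rw [← zpow_add₀ hq0]; congr 1; ring
  have e3 : q^(N:ℤ) * q^((N:ℤ)+1) = q^(2*(N:ℤ)+1) := by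
    rw [← zpow_add₀ hq0]; congr 1; ring
  have hxx : x⁻¹ * x = 1 := inv_mul_cancel₀ hx
  linear_combination (x * tt q x k) * e1 + (x⁻¹ * tt q x k) * e2
    + ((x * x⁻¹) * tt q x k) * e3 + (q^(2*(N:ℤ)+1) * tt q x k) * hxx

include hq in
lemma finJTP (hq0 : q ≠ 0) (hx : x ≠ 0) (N : ℕ) :
    qPochFin x q N * qPochFin (q * x⁻¹) q N
      = ∑ j ∈ Finset.range (2*N+1), tt q x ((j:ℤ) - (N:ℤ)) * gbz q (2*N) (j:ℤ) := by
  induction N with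
  | zero =>
      simp [qp_zero, Finset.sum_range_one, tt_zero, gbz_zero hq]
  | succ N ih =>
      have key : ∀ j : ℤ, gbz q (2*N+2) j
          = q^j * gbz q (2*N) j + (1 + q^(2*(N:ℤ)+1)) * gbz q (2*N) (j-1)
            + q^(2*(N:ℤ)+2-j) * gbz q (2*N) (j-2) := by
        intro j
        have hA := gbz_pascalA hq (2*N+1) j
        have hB1 := gbz_pascalB hq (2*N) j hq0
        have hB2 := gbz_pascalB hq (2*N) (j-1) hq0
        rw [show j-1-1 = j-2 by ring] at hB2
        rw [show 2*N+2 = (2*N+1)+1 from rfl, hA, hB1, hB2]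
        have ec : (((2*N+1:ℕ)):ℤ) + 1 - j = 2*(N:ℤ)+2-j := by push_cast; ring
        have e : q^(2*(N:ℤ)+2-j) * q^(j-1) = q^(2*(N:ℤ)+1) := by
          rw [← zpow_add₀ hq0]; congr 1; ring
        rw [ec]
        linear_combination (gbz q (2*N) (j-1)) * e
      rw [show 2*(N+1) = 2*N+2 by ring]
      rw [show ((N+1:ℕ):ℤ) = (N:ℤ)+1 by push_cast; ring]
      simp only [sub_add_eq_sub_sub]
      have tgt : ∑ j ∈ Finset.range (2*N+2+1), tt q x ((j:ℤ)-(N:ℤ)-1) * gbz q (2*N+2) (j:ℤ)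
          = (∑ j ∈ Finset.range (2*N+1), tt q x ((j:ℤ)-(N:ℤ)-1) * (q^(j:ℤ) * gbz q (2*N) (j:ℤ)))
          + (∑ j ∈ Finset.range (2*N+1),
              tt q x ((j:ℤ)-(N:ℤ)) * ((1+q^(2*(N:ℤ)+1)) * gbz q (2*N) (j:ℤ)))
          + (∑ j ∈ Finset.range (2*N+1),
              tt q x ((j:ℤ)-(N:ℤ)+1) * (q^(2*(N:ℤ)-(j:ℤ)) * gbz q (2*N) (j:ℤ))) := by
        have split : ∑ j ∈ Finset.range (2*N+2+1), tt q x ((j:ℤ)-(N:ℤ)-1) * gbz q (2*N+2) (j:ℤ)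
            = (∑ j ∈ Finset.range (2*N+2+1),
                tt q x ((j:ℤ)-(N:ℤ)-1) * (q^(j:ℤ) * gbz q (2*N) (j:ℤ)))
            + (∑ j ∈ Finset.range (2*N+2+1),
                tt q x ((j:ℤ)-(N:ℤ)-1) * ((1+q^(2*(N:ℤ)+1)) * gbz q (2*N) ((j:ℤ)-1)))
            + (∑ j ∈ Finset.range (2*N+2+1),
                tt q x ((j:ℤ)-(N:ℤ)-1) * (q^(2*(N:ℤ)+2-(j:ℤ)) * gbz q (2*N) ((j:ℤ)-2))) := by
          rw [← Finset.sum_add_distrib, ← Finset.sum_add_distrib]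
          refine Finset.sum_congr rfl fun j hj => ?_
          rw [key (j:ℤ)]; ring
        rw [split]
        congr 1
        · congr 1
          · rw [Finset.sum_range_succ, Finset.sum_range_succ]
            have z1 : gbz q (2*N) ((2*N+1:ℕ):ℤ) = 0 := gbz_gt (by push_cast; omega)
            have z2 : gbz q (2*N) ((2*N+2:ℕ):ℤ) = 0 := gbz_gt (by push_cast; omega)
            rw [z1, z2]
            simp
          · rw [Finset.sum_range_succ' _ (2*N+2), Finset.sum_range_succ]
            have z1 : gbz q (2*N) ((((2*N+1)+1:ℕ):ℤ) - 1) = 0 := gbz_gt (by push_cast; omega)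
            have z0 : gbz q (2*N) (((0:ℕ):ℤ)-1) = 0 := gbz_neg (by omega)
            rw [z1, z0]
            simp only [mul_zero, add_zero]
            refine Finset.sum_congr rfl fun k hk => ?_
            rw [show ((k+1:ℕ):ℤ)-(N:ℤ)-1 = (k:ℤ)-(N:ℤ) by push_cast; ring,
              show ((k+1:ℕ):ℤ)-1 = (k:ℤ) by push_cast; ring]
        · rw [Finset.sum_range_succ' _ (2*N+2), Finset.sum_range_succ' _ (2*N+1)]
          have z0 : gbz q (2*N) (((0:ℕ):ℤ)-2) = 0 := gbz_neg (by omega)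
          have z1 : gbz q (2*N) (((0+1:ℕ):ℤ)-2) = 0 := gbz_neg (by omega)
          rw [z0, z1]
          simp only [mul_zero, add_zero]
          refine Finset.sum_congr rfl fun k hk => ?_
          rw [show ((k+1+1:ℕ):ℤ)-(N:ℤ)-1 = (k:ℤ)-(N:ℤ)+1 by push_cast; ring,
            show ((k+1+1:ℕ):ℤ)-2 = (k:ℤ) by push_cast; ring,
            show 2*(N:ℤ)+2-((k+1+1:ℕ):ℤ) = 2*(N:ℤ)-(k:ℤ) by push_cast; ring]
      rw [tgt]
      have step : (∑ j ∈ Finset.range (2*N+1), tt q x ((j:ℤ) - (N:ℤ)) * gbz q (2*N) (j:ℤ))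
            * ((1 - q^(N:ℤ) * x) * (1 - q^((N:ℤ)+1) * x⁻¹))
          = (∑ j ∈ Finset.range (2*N+1), tt q x ((j:ℤ)-(N:ℤ)-1) * (q^(j:ℤ) * gbz q (2*N) (j:ℤ)))
          + (∑ j ∈ Finset.range (2*N+1),
              tt q x ((j:ℤ)-(N:ℤ)) * ((1+q^(2*(N:ℤ)+1)) * gbz q (2*N) (j:ℤ)))
          + (∑ j ∈ Finset.range (2*N+1),
              tt q x ((j:ℤ)-(N:ℤ)+1) * (q^(2*(N:ℤ)-(j:ℤ)) * gbz q (2*N) (j:ℤ))) := by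
        rw [Finset.sum_mul, ← Finset.sum_add_distrib, ← Finset.sum_add_distrib]
        refine Finset.sum_congr rfl fun j hj => ?_
        have h := tt_mul_M (q := q) (x := x) hq0 hx ((j:ℤ)-(N:ℤ)) N
        have e1 : q^((N:ℤ)-((j:ℤ)-(N:ℤ))) = q^(2*(N:ℤ)-(j:ℤ)) := by congr 1; ring
        have e2 : q^((N:ℤ)+((j:ℤ)-(N:ℤ))) = q^(j:ℤ) := by congr 1; ring
        rw [e1, e2] at h
        rw [show (j:ℤ)-(N:ℤ)+1 = ((j:ℤ)-(N:ℤ))+1 by ring,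
          show (j:ℤ)-(N:ℤ)-1 = ((j:ℤ)-(N:ℤ))-1 by ring]
        linear_combination (gbz q (2*N) (j:ℤ)) * h
      rw [qp_succ, qp_succ]
      have lhs_eq : qPochFin x q N * (1 - q ^ N * x)
            * (qPochFin (q * x⁻¹) q N * (1 - q ^ N * (q * x⁻¹)))
          = (∑ j ∈ Finset.range (2*N+1), tt q x ((j:ℤ) - (N:ℤ)) * gbz q (2*N) (j:ℤ))
            * ((1 - q^(N:ℤ) * x) * (1 - q^((N:ℤ)+1) * x⁻¹)) := by
        rw [← ih, zpow_natCast, zpow_add₀ hq0, zpow_natCast, zpow_one]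
        ring
      rw [lhs_eq, step]

open Filter Topology

lemma summable_theta_real {A B : ℝ} (hA0 : 0 < A) (hA : A < 1) (hB : 0 < B) :
    Summable (fun n : ℤ => A ^ (n*(n-1)/2) * B ^ n) := by
  have hAne : A ≠ 0 := ne_of_gt hA0
  have hBne : B ≠ 0 := ne_of_gt hB
  have fpos : ∀ n : ℤ, 0 < A ^ (n*(n-1)/2) * B ^ n :=
    fun n => mul_pos (zpow_pos hA0 _) (zpow_pos hB _)
  apply Summable.of_nat_of_neg
  · -- positive side
    apply summable_of_ratio_test_tendsto_lt_one (l := 0) one_pos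
    · filter_upwards with n; exact (fpos _).ne'
    · have hr : ∀ n : ℕ, ‖A ^ (((n:ℤ)+1)*(((n:ℤ)+1)-1)/2) * B ^ ((n:ℤ)+1)‖
          / ‖A ^ ((n:ℤ)*((n:ℤ)-1)/2) * B ^ (n:ℤ)‖ = A ^ n * B := by
        intro n
        have he : ((n:ℤ)+1)*(((n:ℤ)+1)-1)/2 = (n:ℤ)*((n:ℤ)-1)/2 + n := by
          rw [show ((n:ℤ)+1)*(((n:ℤ)+1)-1) = (n:ℤ)*((n:ℤ)-1) + (n:ℤ)*2 by ring,
            Int.add_mul_ediv_right _ _ (by norm_num)]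
        rw [he, zpow_add₀ hAne, zpow_add₀ hBne, zpow_one]
        rw [Real.norm_eq_abs, Real.norm_eq_abs, abs_of_pos (by positivity), abs_of_pos (fpos _)]
        rw [zpow_natCast]
        field_simp [(fpos (n:ℤ)).ne']
      have : Tendsto (fun n : ℕ => A ^ n * B) atTop (𝓝 (0 * B)) :=
        (tendsto_pow_atTop_nhds_zero_of_lt_one hA0.le hA).mul_const B
      rw [zero_mul] at this
      refine Tendsto.congr (fun n => ?_) this
      have := hr n
      push_cast at this ⊢
      rw [← this]
  · -- negative side
    apply summable_of_ratio_test_tendsto_lt_one (l := 0) one_pos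
    · filter_upwards with n; exact (fpos _).ne'
    · have hr : ∀ n : ℕ, ‖A ^ ((-((n:ℤ)+1))*((-((n:ℤ)+1))-1)/2) * B ^ (-((n:ℤ)+1))‖
          / ‖A ^ ((-(n:ℤ))*((-(n:ℤ))-1)/2) * B ^ (-(n:ℤ))‖ = A ^ (n+1) * B⁻¹ := by
        intro n
        have he : (-((n:ℤ)+1))*((-((n:ℤ)+1))-1)/2 = (-(n:ℤ))*((-(n:ℤ))-1)/2 + ((n:ℤ)+1) := by
          rw [show (-((n:ℤ)+1))*((-((n:ℤ)+1))-1) = (-(n:ℤ))*((-(n:ℤ))-1) + ((n:ℤ)+1)*2 by ring,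
            Int.add_mul_ediv_right _ _ (by norm_num)]
        have he2 : (-((n:ℤ)+1)) = (-(n:ℤ)) + (-1) := by ring
        rw [he, he2, zpow_add₀ hAne, zpow_add₀ hBne]
        rw [Real.norm_eq_abs, Real.norm_eq_abs, abs_of_pos (by positivity), abs_of_pos (fpos _)]
        rw [show ((n:ℤ)+1) = ((n+1:ℕ):ℤ) by push_cast; ring, zpow_natCast]
        simp only [zpow_neg, zpow_one]
        field_simp [(fpos (-(n:ℤ))).ne']
      have : Tendsto (fun n : ℕ => A ^ (n+1) * B⁻¹) atTop (𝓝 (0 * B⁻¹)) :=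
        ((tendsto_pow_atTop_nhds_zero_of_lt_one hA0.le hA).comp (tendsto_add_atTop_nat 1)).mul_const B⁻¹
      rw [zero_mul] at this
      refine Tendsto.congr (fun n => ?_) this
      have := hr n
      push_cast at this ⊢
      rw [← this]

include hq in
lemma summable_tt_norm (hq0 : q ≠ 0) (hx : x ≠ 0) :
    Summable (fun k : ℤ => ‖tt q x k‖) := by
  have h := summable_theta_real (A := ‖q‖) (B := ‖x‖)
    (norm_pos_iff.mpr hq0) (by simpa using hq) (norm_pos_iff.mpr hx)
  refine h.congr fun k => ?_
  rw [tt, norm_mul, norm_mul, norm_zpow, norm_zpow, norm_zpow, norm_neg, norm_one, one_zpow,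
    one_mul]

include hq in
lemma summable_tt (hq0 : q ≠ 0) (hx : x ≠ 0) : Summable (fun k : ℤ => tt q x k) :=
  (summable_tt_norm hq hq0 hx).of_norm

include hq in
lemma multipliable_qp (x : ℂ) : Multipliable (fun i : ℕ => 1 - q ^ i * x) := by
  by_cases h0 : ∃ i, 1 - q ^ i * x = 0
  · obtain ⟨i₀, hi₀⟩ := h0
    refine ⟨0, ?_⟩
    have hev : ∀ᶠ s : Finset ℕ in atTop, ({i₀} : Finset ℕ) ≤ s := eventually_ge_atTop _
    exact tendsto_const_nhds.congr' (hev.mono fun s hs =>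
      (Finset.prod_eq_zero (i := i₀) (by simpa using hs) hi₀).symm)
  · push_neg at h0
    have hlog : Summable (fun i : ℕ => Complex.log (1 - q ^ i * x)) := by
      have hgeo : Summable (fun i : ℕ => 2 * ‖x‖ * ‖q‖ ^ i) :=
        (summable_geometric_of_lt_one (norm_nonneg q)
          (by simpa using hq)).mul_left _
      apply Summable.of_norm_bounded_eventually_nat hgeo
      have hev : ∀ᶠ i : ℕ in atTop, ‖q ^ i * x‖ ≤ 1/2 := by
        have : Tendsto (fun i : ℕ => ‖q‖ ^ i * ‖x‖) atTop (𝓝 (0 * ‖x‖)) :=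
          (tendsto_pow_atTop_nhds_zero_of_lt_one (norm_nonneg q)
            (by simpa using hq)).mul_const _
        rw [zero_mul] at this
        filter_upwards [this.eventually_le_const (by norm_num : (0:ℝ) < 1/2)] with i hi
        rw [norm_mul, norm_pow]; exact hi
      filter_upwards [hev] with i hi
      set z : ℂ := -(q ^ i * x) with hz
      have hzn : ‖z‖ ≤ 1/2 := by rw [hz, norm_neg]; exact hi
      have hz1 : ‖z‖ < 1 := lt_of_le_of_lt hzn (by norm_num)
      have h1 : (1 : ℂ) - q ^ i * x = 1 + z := by rw [hz]; ring
      rw [h1]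
      calc ‖Complex.log (1 + z)‖ ≤ ‖z‖^2 * (1-‖z‖)⁻¹/2 + ‖z‖ :=
            Complex.norm_log_one_add_le hz1
        _ ≤ 2 * ‖x‖ * ‖q‖ ^ i := by
            have hinv : (1-‖z‖)⁻¹ ≤ 2 := by
              rw [inv_le_comm₀ (by linarith) (by norm_num)]
              linarith
            have hz' : ‖z‖ = ‖q‖^i * ‖x‖ := by rw [hz, norm_neg, norm_mul, norm_pow]
            nlinarith [norm_nonneg z, sq_nonneg ‖z‖, norm_nonneg x,
              pow_nonneg (norm_nonneg q) i]
    have := Complex.multipliable_of_summable_log hlog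
    exact this

include hq in
lemma qq_ne : qPochInf q q ≠ 0 := by
  have h0 : ∀ i : ℕ, (1 : ℂ) - q ^ i * q ≠ 0 := one_sub_qpow_ne hq
  have hlog : Summable (fun i : ℕ => Complex.log (1 - q ^ i * q)) := by
    rcases eq_or_ne q 0 with rfl | hq0
    · apply summable_of_finite_support
      apply Set.Finite.subset (Set.finite_singleton 0)
      intro i hi
      simp only [Function.mem_support] at hi
      rcases Nat.eq_zero_or_pos i with rfl | hip
      · exact Set.mem_singleton _
      · exfalso; apply hi; rw [zero_pow (by omega)]; simp
    · have hgeo : Summable (fun i : ℕ => 2 * ‖q‖ * ‖q‖ ^ i) :=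
        (summable_geometric_of_lt_one (norm_nonneg q)
          (by simpa using hq)).mul_left _
      apply Summable.of_norm_bounded_eventually_nat hgeo
      have hev : ∀ᶠ i : ℕ in atTop, ‖q ^ i * q‖ ≤ 1/2 := by
        have : Tendsto (fun i : ℕ => ‖q‖ ^ i * ‖q‖) atTop (𝓝 (0 * ‖q‖)) :=
          (tendsto_pow_atTop_nhds_zero_of_lt_one (norm_nonneg q)
            (by simpa using hq)).mul_const _
        rw [zero_mul] at this
        filter_upwards [this.eventually_le_const (by norm_num : (0:ℝ) < 1/2)] with i hi
        rw [norm_mul, norm_pow]; exact hi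
      filter_upwards [hev] with i hi
      set z : ℂ := -(q ^ i * q) with hz
      have hzn : ‖z‖ ≤ 1/2 := by rw [hz, norm_neg]; exact hi
      have hz1 : ‖z‖ < 1 := lt_of_le_of_lt hzn (by norm_num)
      have h1 : (1 : ℂ) - q ^ i * q = 1 + z := by rw [hz]; ring
      rw [h1]
      calc ‖Complex.log (1 + z)‖ ≤ ‖z‖^2 * (1-‖z‖)⁻¹/2 + ‖z‖ :=
            Complex.norm_log_one_add_le hz1
        _ ≤ 2 * ‖q‖ * ‖q‖ ^ i := by
            have hinv : (1-‖z‖)⁻¹ ≤ 2 := by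
              rw [inv_le_comm₀ (by linarith) (by norm_num)]
              linarith
            have hz' : ‖z‖ = ‖q‖^i * ‖q‖ := by rw [hz, norm_neg, norm_mul, norm_pow]
            nlinarith [norm_nonneg z, norm_nonneg q, pow_nonneg (norm_nonneg q) i]
  have := Complex.cexp_tsum_eq_tprod (f := fun i => 1 - q ^ i * q) h0 hlog
  rw [qPochInf, ← this]
  exact Complex.exp_ne_zero _

noncomputable def cLow (q : ℂ) : ℝ := Real.exp (∑' i : ℕ, Real.log (1 - ‖q‖^(i+1)))
noncomputable def cUp (q : ℂ) : ℝ := Real.exp (∑' i : ℕ, ‖q‖^(i+1))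

include hq in
lemma summable_pow_succ : Summable (fun i : ℕ => ‖q‖^(i+1)) := by
  have h := (summable_geometric_of_lt_one (norm_nonneg q)
    (by simpa using hq)).mul_left ‖q‖
  exact h.congr fun i => (pow_succ' _ _).symm

include hq in
lemma rpow_lt_one (i : ℕ) : ‖q‖^(i+1) < 1 :=
  pow_lt_one₀ (norm_nonneg q) (by simpa using hq) (by omega)

include hq in
lemma rpow_le_r (i : ℕ) : ‖q‖^(i+1) ≤ ‖q‖ :=
  pow_le_of_le_one (norm_nonneg q) (by simpa using hq.le) (by omega)

include hq in
lemma summable_logr : Summable (fun i : ℕ => Real.log (1 - ‖q‖^(i+1))) := by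
  have hr1 : ‖q‖ < 1 := by simpa using hq
  apply Summable.of_norm_bounded (g := fun i => ‖q‖^(i+1) * (1-‖q‖)⁻¹)
    ((summable_pow_succ hq).mul_right _)
  intro i
  set t := ‖q‖^(i+1) with ht
  have h0 : 0 ≤ t := pow_nonneg (norm_nonneg q) _
  have h1 : t < 1 := rpow_lt_one hq i
  have h2 : t ≤ ‖q‖ := rpow_le_r hq i
  have hlt : Real.log (1-t) ≤ 0 := Real.log_nonpos (by linarith) (by linarith)
  rw [Real.norm_eq_abs, abs_of_nonpos hlt]
  have : -Real.log (1-t) = Real.log ((1-t)⁻¹) := by rw [Real.log_inv]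
  rw [this]
  have hne : (1:ℝ) - t ≠ 0 := by linarith
  calc Real.log ((1-t)⁻¹) ≤ (1-t)⁻¹ - 1 :=
        Real.log_le_sub_one_of_pos (inv_pos.mpr (by linarith))
    _ = t * (1-t)⁻¹ := by field_simp; ring
    _ ≤ t * (1-‖q‖)⁻¹ := by
        apply mul_le_mul_of_nonneg_left _ h0
        apply inv_anti₀ (by linarith) (by linarith)

lemma cLow_pos (q : ℂ) : 0 < cLow q := Real.exp_pos _

include hq in
lemma prod_lower (m : ℕ) : cLow q ≤ ∏ i ∈ Finset.range m, (1 - ‖q‖^(i+1)) := by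
  have hpos : ∀ i : ℕ, (0:ℝ) < 1 - ‖q‖^(i+1) := fun i => by
    have := rpow_lt_one hq i; linarith
  have hexp : ∏ i ∈ Finset.range m, (1 - ‖q‖^(i+1))
      = Real.exp (∑ i ∈ Finset.range m, Real.log (1 - ‖q‖^(i+1))) := by
    rw [Real.exp_sum]
    exact (Finset.prod_congr rfl fun i _ => (Real.exp_log (hpos i)).symm)
  rw [hexp, cLow, Real.exp_le_exp]
  have hneg := (summable_logr hq).neg
  have h := Summable.sum_le_tsum (Finset.range m)
    (fun i _ => by
      have := Real.log_nonpos (by have := rpow_lt_one hq i; linarith : (0:ℝ) ≤ 1 - ‖q‖^(i+1))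
        (by have := pow_nonneg (norm_nonneg q) (i+1); linarith)
      simpa using this) hneg
  rw [tsum_neg] at h
  have h2 : ∑ i ∈ Finset.range m, -Real.log (1-‖q‖^(i+1))
      = -∑ i ∈ Finset.range m, Real.log (1-‖q‖^(i+1)) := by
    rw [Finset.sum_neg_distrib]
  rw [h2] at h
  linarith

include hq in
lemma qpf_norm_le (m : ℕ) : ‖qPochFin q q m‖ ≤ cUp q := by
  rw [qPochFin, norm_prod]
  calc ∏ i ∈ Finset.range m, ‖1 - q^i * q‖
      ≤ ∏ i ∈ Finset.range m, Real.exp (‖q‖^(i+1)) := by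
        apply Finset.prod_le_prod (fun i _ => norm_nonneg _)
        intro i _
        calc ‖1 - q^i*q‖ ≤ ‖(1:ℂ)‖ + ‖q^i*q‖ := norm_sub_le _ _
          _ = 1 + ‖q‖^(i+1) := by rw [norm_one, norm_mul, norm_pow, pow_succ]
          _ ≤ Real.exp (‖q‖^(i+1)) := by
              have := Real.add_one_le_exp (‖q‖^(i+1)); linarith
    _ = Real.exp (∑ i ∈ Finset.range m, ‖q‖^(i+1)) := (Real.exp_sum _ _).symm
    _ ≤ cUp q := by
        rw [cUp, Real.exp_le_exp]
        exact Summable.sum_le_tsum _ (fun i _ => pow_nonneg (norm_nonneg q) _) (summable_pow_succ hq)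

include hq in
lemma qpf_norm_ge (m : ℕ) : cLow q ≤ ‖qPochFin q q m‖ := by
  rw [qPochFin, norm_prod]
  refine le_trans (prod_lower hq m) ?_
  apply Finset.prod_le_prod
  · intro i _; have := rpow_lt_one hq i; linarith
  · intro i _
    calc (1:ℝ) - ‖q‖^(i+1) = ‖(1:ℂ)‖ - ‖q^i * q‖ := by
          rw [norm_one, norm_mul, norm_pow, pow_succ]
      _ ≤ ‖1 - q^i*q‖ := norm_sub_norm_le _ _

include hq in
lemma gbz_norm_le (n : ℕ) (j : ℤ) : ‖gbz q n j‖ ≤ cUp q / (cLow q * cLow q) := by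
  rw [gbz]
  split_ifs with h
  · rw [norm_div, norm_mul]
    apply div_le_div₀ (Real.exp_pos _).le (qpf_norm_le hq n)
      (mul_pos (cLow_pos q) (cLow_pos q))
      (mul_le_mul (qpf_norm_ge hq _) (qpf_norm_ge hq _) (cLow_pos q).le (norm_nonneg _))
  · rw [norm_zero]
    exact (div_pos (Real.exp_pos _) (mul_pos (cLow_pos q) (cLow_pos q))).le

include hq in
lemma tendsto_qpf (x : ℂ) : Tendsto (fun m => qPochFin x q m) atTop (𝓝 (qPochInf x q)) := by
  have h := (multipliable_qp hq x).hasProd.tendsto_prod_nat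
  simpa only [qPochFin, qPochInf] using h

include hq in
lemma gbz_tendsto (k : ℤ) :
    Tendsto (fun N : ℕ => gbz q (2*N) (k + N)) atTop (𝓝 (qPochInf q q)⁻¹) := by
  have h2N : Tendsto (fun N : ℕ => qPochFin q q (2*N)) atTop (𝓝 (qPochInf q q)) :=
    (tendsto_qpf hq q).comp (tendsto_atTop_mono
      (fun n => by simp only [id_eq]; omega : ∀ n : ℕ, id n ≤ 2*n) tendsto_id)
  have ha : Tendsto (fun N : ℕ => qPochFin q q ((k + N).toNat)) atTop (𝓝 (qPochInf q q)) :=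
    (tendsto_qpf hq q).comp (tendsto_atTop_mono (fun n => by omega : ∀ n:ℕ, n - k.natAbs ≤ (k + n).toNat)
      (tendsto_sub_atTop_nat _))
  have hb : Tendsto (fun N : ℕ => qPochFin q q (2*N - (k + N).toNat)) atTop (𝓝 (qPochInf q q)) :=
    (tendsto_qpf hq q).comp
      (tendsto_atTop_mono (fun n => by omega : ∀ n:ℕ, n - k.natAbs ≤ 2*n - (k + n).toNat)
      (tendsto_sub_atTop_nat _))
  have hQ : qPochInf q q ≠ 0 := qq_ne hq
  have hdiv : Tendsto (fun N : ℕ => qPochFin q q (2*N)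
      / (qPochFin q q ((k+N).toNat) * qPochFin q q (2*N - (k+N).toNat))) atTop
      (𝓝 (qPochInf q q / (qPochInf q q * qPochInf q q))) :=
    h2N.div (ha.mul hb) (mul_ne_zero hQ hQ)
  have hval : qPochInf q q / (qPochInf q q * qPochInf q q) = (qPochInf q q)⁻¹ := by
    field_simp
  rw [hval] at hdiv
  apply hdiv.congr'
  filter_upwards [eventually_ge_atTop k.natAbs] with N hN
  rw [gbz, if_pos (by omega)]

include hq in
theorem JTP (hq0 : q ≠ 0) (hx : x ≠ 0) : jt x q = ∑' k : ℤ, tt q x k := by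
  have hsum : ∀ N : ℕ, qPochFin x q N * qPochFin (q*x⁻¹) q N
      = ∑' k : ℤ, tt q x k * gbz q (2*N) (k + N) := by
    intro N
    rw [finJTP hq hq0 hx N, tsum_eq_sum (s := Finset.Icc (-(N:ℤ)) N)
      (f := fun k => tt q x k * gbz q (2*N) (k + N)) ?_]
    · refine (Finset.sum_nbij' (i := fun (j:ℕ) => (j:ℤ) - N) (j := fun k : ℤ => (k + N).toNat)
        ?_ ?_ ?_ ?_ ?_)
      · intro j hj; simp only [Finset.mem_range] at hj; simp only [Finset.mem_Icc]; omega
      · intro k hk; simp only [Finset.mem_Icc] at hk; simp only [Finset.mem_range]; omega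
      · intro j hj; simp only [Finset.mem_range] at hj; omega
      · intro k hk; simp only [Finset.mem_Icc] at hk; omega
      · intro j hj
        rw [show (j:ℤ) - N + N = (j:ℤ) by ring]
    · intro k hk
      simp only [Finset.mem_Icc, not_and_or, not_le] at hk
      rcases hk with h | h
      · rw [gbz_neg (by omega)]; ring
      · rw [gbz_gt (by push_cast; omega)]; ring
  have hbound : Summable (fun k : ℤ => ‖tt q x k‖ * (cUp q / (cLow q * cLow q))) :=
    (summable_tt_norm hq hq0 hx).mul_right _
  have hab : ∀ k : ℤ, Tendsto (fun N : ℕ => tt q x k * gbz q (2*N) (k + N)) atTop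
      (𝓝 (tt q x k * (qPochInf q q)⁻¹)) := fun k => (gbz_tendsto hq k).const_mul _
  have hBd : ∀ᶠ N : ℕ in atTop, ∀ k : ℤ,
      ‖tt q x k * gbz q (2*N) (k + N)‖ ≤ ‖tt q x k‖ * (cUp q / (cLow q * cLow q)) := by
    filter_upwards with N k
    rw [norm_mul]
    exact mul_le_mul_of_nonneg_left (gbz_norm_le hq _ _) (norm_nonneg _)
  have hTan := tendsto_tsum_of_dominated_convergence hbound hab hBd
  have hL : Tendsto (fun N => qPochFin x q N * qPochFin (q*x⁻¹) q N) atTop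
      (𝓝 (qPochInf x q * qPochInf (q/x) q)) := by
    have := (tendsto_qpf hq x).mul (tendsto_qpf hq (q*x⁻¹))
    rw [div_eq_mul_inv]
    exact this
  have hL' : Tendsto (fun N : ℕ => ∑' k : ℤ, tt q x k * gbz q (2*N) (k + N)) atTop
      (𝓝 (qPochInf x q * qPochInf (q/x) q)) := hL.congr hsum
  have heq : qPochInf x q * qPochInf (q/x) q = ∑' k : ℤ, tt q x k * (qPochInf q q)⁻¹ :=
    tendsto_nhds_unique hL' hTan
  rw [tsum_mul_right] at heq
  rw [jt, heq]
  field_simp [qq_ne hq]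

lemma two_mul_half (z : ℤ) : 2 * (z*(z-1)/2) = z*(z-1) := by
  have hev : Even (z*(z-1)) := by
    have := Int.even_mul_succ_self (z-1)
    rwa [show (z-1)*(z-1+1) = z*(z-1) by ring] at this
  obtain ⟨k, hk⟩ := hev
  omega

lemma two_mul_half' (i : ℤ) : 2 * ((i^2-i)/2) = i^2 - i := by
  have := two_mul_half i
  rw [show i*(i-1) = i^2 - i by ring] at this
  exact this

variable {y : ℂ}

lemma term_eq (hq0 : q ≠ 0) (hx : x ≠ 0) (hy : y ≠ 0) (i a b : ℤ) :
    ((-1:ℂ)^i * q^((i^2-i)/2) * x^i) * (tt (q^15) (-(q^(3*i+9) * x^3 * y⁻¹)) a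
      * tt (q^10) (q^(2*i+1) * x^2 * y) b)
    = tt q x (i+3*a+2*b) * tt (q^6) y (b-a) := by
  have hm1 : (-1 : ℂ) ≠ 0 := by norm_num
  have c15 : (q^(15:ℕ)) = q^((15:ℤ)) := by rw [← zpow_natCast q 15]; norm_num
  have c10 : (q^(10:ℕ)) = q^((10:ℤ)) := by rw [← zpow_natCast q 10]; norm_num
  have c6 : (q^(6:ℕ)) = q^((6:ℤ)) := by rw [← zpow_natCast q 6]; norm_num
  have cx3 : (x^(3:ℕ)) = x^((3:ℤ)) := by rw [← zpow_natCast x 3]; norm_num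
  have cx2 : (x^(2:ℕ)) = x^((2:ℤ)) := by rw [← zpow_natCast x 2]; norm_num
  have hA : tt (q^15) (-(q^(3*i+9) * x^3 * y⁻¹)) a
      = ((-1:ℂ)^a * (-1)^a) * (q^(15*(a*(a-1)/2)) * q^((3*i+9)*a)) * x^(3*a) * y^(-a) := by
    rw [tt, show -(q^(3*i+9) * x^3 * y⁻¹) = (-1) * (q^(3*i+9) * x^3 * y⁻¹) by ring,
      mul_zpow, mul_zpow, mul_zpow, inv_zpow, ← zpow_neg, c15, cx3,
      ← zpow_mul q 15 (a*(a-1)/2), ← zpow_mul q (3*i+9) a, ← zpow_mul x 3 a]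
    ring
  have hB : tt (q^10) (q^(2*i+1) * x^2 * y) b
      = (-1:ℂ)^b * (q^(10*(b*(b-1)/2)) * q^((2*i+1)*b)) * x^(2*b) * y^b := by
    rw [tt, mul_zpow, mul_zpow, c10, cx2,
      ← zpow_mul q 10 (b*(b-1)/2), ← zpow_mul q (2*i+1) b, ← zpow_mul x 2 b]
    ring
  have hs : (-1:ℂ)^i * ((-1)^a * (-1)^a) * (-1)^b
      = (-1:ℂ)^(i+3*a+2*b) * (-1)^(b-a) := by
    have l1 : (-1:ℂ)^i * ((-1)^a*(-1)^a) * (-1)^b = (-1)^(i+a+a+b) := by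
      rw [zpow_add₀ hm1 (i+a+a) b, zpow_add₀ hm1 (i+a) a, zpow_add₀ hm1 i a]; ring
    have l2 : (-1:ℂ)^(i+3*a+2*b) * (-1)^(b-a) = (-1)^(i+a+a+b) * (-1)^(2*b) := by
      rw [← zpow_add₀ hm1, ← zpow_add₀ hm1]; congr 1; ring
    rw [l1, l2, zpow_mul, show ((-1:ℂ)^(2:ℤ)) = 1 by norm_num, one_zpow, mul_one]
  have hqs : q^((i^2-i)/2) * (q^(15*(a*(a-1)/2)) * q^((3*i+9)*a))
        * (q^(10*(b*(b-1)/2)) * q^((2*i+1)*b))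
      = q^((i+3*a+2*b)*((i+3*a+2*b)-1)/2) * q^(6*((b-a)*((b-a)-1)/2)) := by
    rw [← zpow_add₀ hq0 (15*(a*(a-1)/2)) ((3*i+9)*a),
      ← zpow_add₀ hq0 (10*(b*(b-1)/2)) ((2*i+1)*b),
      ← zpow_add₀ hq0 ((i^2-i)/2), ← zpow_add₀ hq0,
      ← zpow_add₀ hq0 ((i+3*a+2*b)*((i+3*a+2*b)-1)/2)]
    congr 1
    apply mul_left_cancel₀ (show (2:ℤ) ≠ 0 by norm_num)
    have h1 := two_mul_half' i
    have h2 := two_mul_half a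
    have h3 := two_mul_half b
    have h4 := two_mul_half (i+3*a+2*b)
    have h5 := two_mul_half (b-a)
    linear_combination h1 + 15*h2 + 10*h3 - h4 - 6*h5
  have hxs : x^i * x^(3*a) * x^(2*b) = x^(i+3*a+2*b) := by
    rw [← zpow_add₀ hx, ← zpow_add₀ hx]
  have hys : y^(-a) * y^b = y^(b-a) := by
    rw [← zpow_add₀ hy]; congr 1; ring
  calc ((-1:ℂ)^i * q^((i^2-i)/2) * x^i) * (tt (q^15) (-(q^(3*i+9) * x^3 * y⁻¹)) a
      * tt (q^10) (q^(2*i+1) * x^2 * y) b)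
      = ((-1:ℂ)^i * ((-1)^a * (-1)^a) * (-1)^b)
        * (q^((i^2-i)/2) * (q^(15*(a*(a-1)/2)) * q^((3*i+9)*a))
            * (q^(10*(b*(b-1)/2)) * q^((2*i+1)*b)))
        * (x^i * x^(3*a) * x^(2*b)) * (y^(-a) * y^b) := by
        rw [hA, hB]; ring
    _ = ((-1:ℂ)^(i+3*a+2*b) * (-1)^(b-a))
        * (q^((i+3*a+2*b)*((i+3*a+2*b)-1)/2) * q^(6*((b-a)*((b-a)-1)/2)))
        * x^(i+3*a+2*b) * y^(b-a) := by rw [hs, hqs, hxs, hys]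
    _ = tt q x (i+3*a+2*b) * tt (q^6) y (b-a) := by
        rw [tt, tt, c6, ← zpow_mul q 6 ((b-a)*((b-a)-1)/2)]
        ring

/-- The lattice equivalence. -/
def latE : ({i : ℤ // i ∈ Finset.Icc (-2:ℤ) 2} × (ℤ × ℤ)) ≃ (ℤ × ℤ) where
  toFun z := (z.1.1 + 3*z.2.1 + 2*z.2.2, z.2.2 - z.2.1)
  invFun p := (⟨(p.1 - 2*p.2 + 2) % 5 - 2, by simp only [Finset.mem_Icc]; omega⟩,
    ((p.1 - 2*p.2 - ((p.1 - 2*p.2 + 2) % 5 - 2))/5,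
      p.2 + (p.1 - 2*p.2 - ((p.1 - 2*p.2 + 2) % 5 - 2))/5))
  left_inv := by
    rintro ⟨⟨i, hi⟩, a, b⟩
    simp only [Finset.mem_Icc] at hi
    simp only [Prod.mk.injEq, Subtype.mk.injEq]
    refine ⟨?_, ?_, ?_⟩ <;> omega
  right_inv := by
    rintro ⟨n, m⟩
    simp only [Prod.mk.injEq]
    constructor <;> omega

end QJT

open QJT in
theorem jt_quint_sum (q x y : ℂ) (hq0 : 0 < ‖q‖)
    (hq1 : ‖q‖ < 1) (hx : x ≠ 0) (hy : y ≠ 0) :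
    jt x q * jt y (q ^ 6) =
      ∑ i ∈ Finset.Icc (-2 : ℤ) 2, (-1) ^ i * q ^ ((i ^ 2 - i) / 2) * x ^ i *
        jt (-(q ^ (3 * i + 9) * x ^ 3 * y⁻¹)) (q ^ 15) *
        jt (q ^ (2 * i + 1) * x ^ 2 * y) (q ^ 10) := by
  have hq : q ≠ 0 := by
    intro h; rw [h] at hq0; simp at hq0
  have h6 : ‖q^6‖ < 1 := by
    rw [norm_pow]; exact pow_lt_one₀ (norm_nonneg q) hq1 (by norm_num)
  have h10 : ‖q^10‖ < 1 := by
    rw [norm_pow]; exact pow_lt_one₀ (norm_nonneg q) hq1 (by norm_num)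
  have h15 : ‖q^15‖ < 1 := by
    rw [norm_pow]; exact pow_lt_one₀ (norm_nonneg q) hq1 (by norm_num)
  have h6z : (q:ℂ)^6 ≠ 0 := pow_ne_zero _ hq
  have h10z : (q:ℂ)^10 ≠ 0 := pow_ne_zero _ hq
  have h15z : (q:ℂ)^15 ≠ 0 := pow_ne_zero _ hq
  have sx : Summable (fun k : ℤ => ‖tt q x k‖) := summable_tt_norm hq1 hq hx
  have sy : Summable (fun k : ℤ => ‖tt (q^6) y k‖) := summable_tt_norm h6 h6z hy
  have hLsum : Summable (fun p : ℤ × ℤ => tt q x p.1 * tt (q^6) y p.2) :=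
    summable_mul_of_summable_norm sx sy
  have lhs_eq : jt x q * jt y (q^6) = ∑' p : ℤ × ℤ, tt q x p.1 * tt (q^6) y p.2 := by
    rw [JTP hq1 hq hx, JTP h6 h6z hy]
    exact tsum_mul_tsum_of_summable_norm sx sy
  have rhs_term : ∀ i : ℤ,
      (-1:ℂ) ^ i * q ^ ((i ^ 2 - i) / 2) * x ^ i *
        jt (-(q ^ (3 * i + 9) * x ^ 3 * y⁻¹)) (q ^ 15) *
        jt (q ^ (2 * i + 1) * x ^ 2 * y) (q ^ 10)
      = ∑' p : ℤ × ℤ, tt q x (i + 3*p.1 + 2*p.2) * tt (q^6) y (p.2 - p.1) := by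
    intro i
    have hAz : -(q ^ (3*i+9) * x^3 * y⁻¹) ≠ 0 := by
      apply neg_ne_zero.mpr
      exact mul_ne_zero (mul_ne_zero (zpow_ne_zero _ hq) (pow_ne_zero _ hx)) (inv_ne_zero hy)
    have hBz : q^(2*i+1) * x^2 * y ≠ 0 :=
      mul_ne_zero (mul_ne_zero (zpow_ne_zero _ hq) (pow_ne_zero _ hx)) hy
    have sA : Summable (fun k : ℤ => ‖tt (q^15) (-(q^(3*i+9) * x^3 * y⁻¹)) k‖) :=
      summable_tt_norm h15 h15z hAz
    have sB : Summable (fun k : ℤ => ‖tt (q^10) (q^(2*i+1) * x^2 * y) k‖) :=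
      summable_tt_norm h10 h10z hBz
    rw [JTP h15 h15z hAz, JTP h10 h10z hBz,
      mul_assoc ((-1:ℂ)^i * q^((i^2-i)/2) * x^i) _ _,
      tsum_mul_tsum_of_summable_norm sA sB, ← tsum_mul_left]
    exact tsum_congr fun p => term_eq hq hx hy i p.1 p.2
  set L : ℤ × ℤ → ℂ := fun p => tt q x p.1 * tt (q^6) y p.2 with hLdef
  have hF : Summable (fun w : ↥(Finset.Icc (-2:ℤ) 2) × (ℤ × ℤ) => L (latE w)) :=
    (latE.summable_iff).mpr hLsum
  have hF1 : ∀ b, Summable (fun c : ℤ × ℤ => L (latE (b, c))) := fun b => hF.prod_factor b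
  calc jt x q * jt y (q^6) = ∑' p : ℤ × ℤ, L p := lhs_eq
    _ = ∑' w : ↥(Finset.Icc (-2:ℤ) 2) × (ℤ × ℤ), L (latE w) := (latE.tsum_eq L).symm
    _ = ∑' (i : ↥(Finset.Icc (-2:ℤ) 2)), ∑' p : ℤ × ℤ, L (latE (i, p)) := Summable.tsum_prod' hF hF1
    _ = ∑ (i : ↥(Finset.Icc (-2:ℤ) 2)), ∑' p : ℤ × ℤ, L (latE (i, p)) := tsum_fintype _
    _ = ∑ i ∈ Finset.Icc (-2:ℤ) 2,
          ∑' p : ℤ × ℤ, tt q x (i + 3*p.1 + 2*p.2) * tt (q^6) y (p.2 - p.1) :=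
        Finset.sum_coe_sort _ (fun i : ℤ =>
          ∑' p : ℤ × ℤ, tt q x (i + 3*p.1 + 2*p.2) * tt (q^6) y (p.2 - p.1))
    _ = ∑ i ∈ Finset.Icc (-2:ℤ) 2, (-1) ^ i * q ^ ((i ^ 2 - i) / 2) * x ^ i *
          jt (-(q ^ (3 * i + 9) * x ^ 3 * y⁻¹)) (q ^ 15) *
          jt (q ^ (2 * i + 1) * x ^ 2 * y) (q ^ 10) :=
        Finset.sum_congr rfl fun i _ => (rhs_term i).symm
end
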